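/- arXiv:1206.0598 — 4 statements merged into one kernel-verified Lean document; each statement's English description precedes it below -/
import Mathlib

section
/- For every integer n ≥ 2, the following identity holds in the polynomial ring ℤ[x_1,…,x_n]: the sum over all Cayley trees T with vertex set {1,…,n} of the monomial ∏_{i=1}^n x_i^{deg_T(i)} equals x_1 x_2 ⋯ x_n · (x_1 + x_2 + ⋯ + x_n)^{n−2}. -/
open scoped Classical

open Finset SimpleGraph

noncomputable section CayleyAux

variable {V : Type} [Fintype V] [DecidableEq V]

/-- Number of occurrences of `v` among the values of `f`. -/
def cntAux {m : ℕ} (f : Fin m → V) (v : V) : ℕ := #(univ.filter fun j => f j = v)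

lemma cntAux_snoc {m : ℕ} (g : Fin m → V) (x v : V) :
    cntAux (Fin.snoc g x) v = cntAux g v + if x = v then 1 else 0 := by
  simp only [cntAux, card_filter]
  rw [Fin.sum_univ_castSucc]
  simp

lemma sum_cntAux {m : ℕ} (f : Fin m → V) : ∑ v, cntAux f v = m := by
  have := Finset.card_eq_sum_card_fiberwise (f := f) (s := univ) (t := (univ : Finset V))
    (by simp)
  simpa [cntAux, eq_comm] using this.symm

lemma cntAux_val {v0 : V} {m : ℕ} (f : Fin m → {v : V // v ≠ v0}) (w : {v : V // v ≠ v0}) :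
    cntAux (fun j => (f j : V)) (w : V) = cntAux f w := by
  simp [cntAux, Subtype.ext_iff]

lemma cntAux_val_v0 {v0 : V} {m : ℕ} (f : Fin m → {v : V // v ≠ v0}) :
    cntAux (fun j => (f j : V)) v0 = 0 := by
  simp only [cntAux, card_eq_zero, filter_eq_empty_iff]
  exact fun j _ => (f j).2

lemma cntAux_eq_zero_iff {m : ℕ} (f : Fin m → V) (v : V) :
    cntAux f v = 0 ↔ ∀ j, f j ≠ v := by
  simp [cntAux, card_eq_zero, filter_eq_empty_iff]

end CayleyAux

noncomputable section CayleyAux2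

variable {V : Type} [Fintype V] [DecidableEq V]

/-- Add to a graph `H` on `V \ {v0}` the vertex `v0` as a leaf attached to `u`. -/
def addLeafAux (v0 : V) (H : SimpleGraph {v : V // v ≠ v0}) (u : {v : V // v ≠ v0}) :
    SimpleGraph V where
  Adj a b := (∃ x y, H.Adj x y ∧ (x : V) = a ∧ (y : V) = b) ∨
    (a = v0 ∧ b = (u : V)) ∨ (b = v0 ∧ a = (u : V))
  symm := by
    constructor
    intro a b h
    rcases h with ⟨x, y, h, hx, hy⟩ | ⟨h1, h2⟩ | ⟨h1, h2⟩
    · exact Or.inl ⟨y, x, h.symm, hy, hx⟩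
    · exact Or.inr (Or.inr ⟨h1, h2⟩)
    · exact Or.inr (Or.inl ⟨h1, h2⟩)
  loopless := by
    constructor
    intro a h
    rcases h with ⟨x, y, h, hx, hy⟩ | ⟨h1, h2⟩ | ⟨h1, h2⟩
    · exact H.loopless.irrefl x (by rwa [show y = x from Subtype.ext (hy.trans hx.symm)] at h)
    · exact u.2 (h2.symm.trans h1)
    · exact u.2 (h2.symm.trans h1)

lemma addLeafAux_adj {v0 : V} {H : SimpleGraph {v : V // v ≠ v0}} {u : {v : V // v ≠ v0}}
    {a b : V} : (addLeafAux v0 H u).Adj a b ↔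
      (∃ x y, H.Adj x y ∧ (x : V) = a ∧ (y : V) = b) ∨
      (a = v0 ∧ b = (u : V)) ∨ (b = v0 ∧ a = (u : V)) := Iff.rfl

/-- The inclusion homomorphism from the induced subgraph. -/
def homVal {v0 : V} (G : SimpleGraph V) :
    (SimpleGraph.comap (Subtype.val : {v : V // v ≠ v0} → V) G) →g G :=
  ⟨Subtype.val, fun h => h⟩

@[simp] lemma homVal_apply {v0 : V} (G : SimpleGraph V) (x : {v : V // v ≠ v0}) :
    homVal G x = (x : V) := rfl

/-- Lift a walk avoiding `v0` to the induced subgraph on the complement of `v0`. -/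
def liftWalk {v0 : V} {G : SimpleGraph V} :
    ∀ {a b : V} (p : G.Walk a b) (ha : a ≠ v0) (hb : b ≠ v0), v0 ∉ p.support →
      (SimpleGraph.comap (Subtype.val : {v : V // v ≠ v0} → V) G).Walk ⟨a, ha⟩ ⟨b, hb⟩
  | _, _, SimpleGraph.Walk.nil, _, _, _ => SimpleGraph.Walk.nil
  | a, b, SimpleGraph.Walk.cons (v := c) h q, ha, hb, hs =>
      have hc : c ≠ v0 := fun heq => hs (by
        rw [SimpleGraph.Walk.support_cons]
        exact List.mem_cons_of_mem _ (heq ▸ q.start_mem_support))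
      SimpleGraph.Walk.cons (by exact h) (liftWalk q hc hb (fun hv => hs (by
        rw [SimpleGraph.Walk.support_cons]; exact List.mem_cons_of_mem _ hv)))

lemma liftWalk_map {v0 : V} {G : SimpleGraph V} :
    ∀ {a b : V} (p : G.Walk a b) (ha : a ≠ v0) (hb : b ≠ v0) (hs : v0 ∉ p.support),
      (liftWalk p ha hb hs).map (homVal G) = p
  | _, _, SimpleGraph.Walk.nil, _, _, _ => rfl
  | a, b, SimpleGraph.Walk.cons (v := c) h q, ha, hb, hs => by
      rw [liftWalk]
      exact congrArg (SimpleGraph.Walk.cons h) (liftWalk_map q _ hb _)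

lemma isAcyclic_comap {v0 : V} {G : SimpleGraph V} (hG : G.IsAcyclic) :
    (SimpleGraph.comap (Subtype.val : {v : V // v ≠ v0} → V) G).IsAcyclic := by
  intro x c hc
  exact hG (c.map (homVal G)) (hc.map Subtype.val_injective)

/-- A path between vertices distinct from a leaf `v0` avoids `v0`. -/
lemma leaf_path_avoid {v0 : V} {G : SimpleGraph V} {u : V}
    (hu : ∀ w, G.Adj v0 w ↔ w = u) :
    ∀ {a b : V} (p : G.Walk a b), p.IsPath → a ≠ v0 → b ≠ v0 → v0 ∉ p.support := by
  intro a b p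
  induction p with
  | nil => intro _ ha _; simp [Ne.symm ha]
  | @cons a c b h q ih =>
    intro hp ha hb
    rw [SimpleGraph.Walk.support_cons, List.mem_cons]
    push_neg
    refine ⟨Ne.symm ha, ?_⟩
    by_cases hc : c = v0
    · subst hc
      have hau : a = u := (hu a).1 h.symm
      cases q with
      | nil => exact absurd rfl hb
      | @cons _ c' _ h' q' =>
        exfalso
        have hcu : c' = u := (hu c').1 h'
        have : a ∉ (SimpleGraph.Walk.cons h' q').support :=
          ((SimpleGraph.Walk.cons_isPath_iff h _).1 hp).2
        apply this
        rw [SimpleGraph.Walk.support_cons]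
        exact List.mem_cons_of_mem _ (by rw [hau, ← hcu]; exact q'.start_mem_support)
    · exact ih hp.of_cons hc hb

/-- The unique neighbour of a degree-one vertex. -/
lemma exists_unique_nbr {v0 : V} {G : SimpleGraph V} (h1 : G.degree v0 = 1) :
    ∃ u : V, u ≠ v0 ∧ ∀ w, G.Adj v0 w ↔ w = u := by
  obtain ⟨u, hu⟩ := Finset.card_eq_one.1 (h1 ▸ rfl :
    (G.neighborFinset v0).card = 1)
  refine ⟨u, ?_, fun w => ?_⟩
  · have : G.Adj v0 u := by
      rw [← SimpleGraph.mem_neighborFinset, hu]; exact Finset.mem_singleton_self u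
    exact (G.ne_of_adj this).symm
  · rw [← SimpleGraph.mem_neighborFinset, hu, Finset.mem_singleton]

lemma degree_pos_of_connected {G : SimpleGraph V} (hG : G.Connected)
    (h2 : 1 < Fintype.card V) (v : V) : 0 < G.degree v := by
  obtain ⟨w, hw⟩ := Fintype.exists_ne_of_one_lt_card h2 v
  obtain ⟨p⟩ := hG.preconnected v w
  rw [SimpleGraph.degree_pos_iff_exists_adj]
  cases p with
  | nil => exact absurd rfl hw
  | cons h q => exact ⟨_, h⟩

end CayleyAux2


noncomputable section CayleyAux3
variable {V : Type} [Fintype V] [DecidableEq V]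
set_option maxHeartbeats 1000000

section Trees
variable {v0 : V}

lemma card_filter_subtype (v0 : V) (p : V → Prop) :
    #((univ : Finset {v : V // v ≠ v0}).filter fun z : {v : V // v ≠ v0} => p (z : V)) =
      #((univ : Finset V).filter fun z => z ≠ v0 ∧ p z) := by
  apply Finset.card_nbij (Subtype.val : {v : V // v ≠ v0} → V)
  · intro a ha
    simp only [mem_coe, mem_filter, mem_univ, true_and] at ha ⊢
    exact ⟨a.2, ha⟩
  · exact Subtype.val_injective.injOn
  · intro b hb
    simp only [coe_filter, mem_univ, true_and, Set.mem_setOf_eq] at hb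
    refine ⟨⟨b, hb.1⟩, ?_, rfl⟩
    simp [hb.2]

lemma isTree_comap {G : SimpleGraph V} (hG : G.IsTree) {u : {v : V // v ≠ v0}}
    (hu : ∀ w, G.Adj v0 w ↔ w = (u : V)) :
    (SimpleGraph.comap (Subtype.val : {v : V // v ≠ v0} → V) G).IsTree := by
  constructor
  · rw [SimpleGraph.connected_iff]
    refine ⟨fun x y => ?_, ⟨u⟩⟩
    obtain ⟨w⟩ := hG.isConnected.preconnected (x : V) (y : V)
    have hav : v0 ∉ (w.toPath : G.Walk (x : V) (y : V)).support :=
      leaf_path_avoid hu _ w.toPath.2 x.2 y.2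
    exact ⟨liftWalk (w.toPath : G.Walk (x : V) (y : V)) x.2 y.2 hav⟩
  · exact isAcyclic_comap hG.IsAcyclic

lemma degree_comap_of_leaf {G : SimpleGraph V} {u : {v : V // v ≠ v0}}
    (hu : ∀ w, G.Adj v0 w ↔ w = (u : V)) (w : {v : V // v ≠ v0}) :
    (SimpleGraph.comap (Subtype.val : {v : V // v ≠ v0} → V) G).degree w =
      G.degree (w : V) - (if w = u then 1 else 0) := by
  have hNF : (SimpleGraph.comap (Subtype.val : {v : V // v ≠ v0} → V) G).neighborFinset w =
      (univ : Finset {v : V // v ≠ v0}).filter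
        fun z : {v : V // v ≠ v0} => G.Adj (w : V) (z : V) := by
    ext z; simp [SimpleGraph.mem_neighborFinset]
  have hdeg : (SimpleGraph.comap (Subtype.val : {v : V // v ≠ v0} → V) G).degree w =
      #((univ : Finset V).filter fun z => z ≠ v0 ∧ G.Adj (w : V) z) := by
    rw [show (SimpleGraph.comap (Subtype.val : {v : V // v ≠ v0} → V) G).degree w =
      ((SimpleGraph.comap (Subtype.val : {v : V // v ≠ v0} → V) G).neighborFinset w).card
      from rfl, hNF, card_filter_subtype]
  have hGdeg : G.degree (w : V) = #((univ : Finset V).filter fun z => G.Adj (w : V) z) := by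
    rw [show G.degree (w : V) = (G.neighborFinset (w : V)).card from rfl,
      SimpleGraph.neighborFinset_eq_filter]
  by_cases hwu : w = u
  · subst hwu
    have hadj : G.Adj (w : V) v0 := ((hu (w : V)).2 rfl).symm
    have : ((univ : Finset V).filter fun z => z ≠ v0 ∧ G.Adj (w : V) z) =
        ((univ : Finset V).filter fun z => G.Adj (w : V) z).erase v0 := by
      ext z; simp only [mem_filter, mem_univ, true_and, Finset.mem_erase]
    rw [hdeg, this, Finset.card_erase_of_mem (Finset.mem_filter.2 ⟨Finset.mem_univ _, hadj⟩), hGdeg]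
    simp
  · have : ((univ : Finset V).filter fun z => z ≠ v0 ∧ G.Adj (w : V) z) =
        ((univ : Finset V).filter fun z => G.Adj (w : V) z) := by
      ext z
      simp only [mem_filter, mem_univ, true_and, and_iff_right_iff_imp]
      intro hz hz0
      subst hz0
      exact hwu (Subtype.ext ((hu (w : V)).1 hz.symm))
    rw [hdeg, this, hGdeg]
    simp [hwu]

lemma comap_addLeafAux (H : SimpleGraph {v : V // v ≠ v0}) (u : {v : V // v ≠ v0}) :
    SimpleGraph.comap (Subtype.val : {v : V // v ≠ v0} → V) (addLeafAux v0 H u) = H := by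
  ext a b
  simp only [SimpleGraph.comap_adj, addLeafAux_adj]
  constructor
  · rintro (⟨x, y, h, hx, hy⟩ | ⟨h1, _⟩ | ⟨h1, _⟩)
    · rwa [show x = a from Subtype.ext hx, show y = b from Subtype.ext hy] at h
    · exact absurd h1 a.2
    · exact absurd h1 b.2
  · intro h; exact Or.inl ⟨a, b, h, rfl, rfl⟩

lemma addLeafAux_adj_v0 {H : SimpleGraph {v : V // v ≠ v0}} {u : {v : V // v ≠ v0}} (z : V) :
    (addLeafAux v0 H u).Adj v0 z ↔ z = (u : V) := by
  rw [addLeafAux_adj]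
  constructor
  · rintro (⟨x, y, _, hx, _⟩ | ⟨_, h2⟩ | ⟨_, h2⟩)
    · exact absurd hx x.2
    · exact h2
    · exact absurd h2.symm u.2
  · intro h; exact Or.inr (Or.inl ⟨rfl, h⟩)

lemma isTree_addLeafAux {H : SimpleGraph {v : V // v ≠ v0}} {u : {v : V // v ≠ v0}}
    (hH : H.IsTree) : (addLeafAux v0 H u).IsTree := by
  constructor
  · rw [SimpleGraph.connected_iff]
    refine ⟨?_, ⟨v0⟩⟩
    have key : ∀ b : V, (addLeafAux v0 H u).Reachable (u : V) b := by
      intro b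
      by_cases hb : b = v0
      · subst hb
        exact (SimpleGraph.Adj.reachable (by
          exact (addLeafAux_adj_v0 (u : V)).2 rfl |>.symm))
      · have : H.Reachable u ⟨b, hb⟩ := hH.isConnected.preconnected u ⟨b, hb⟩
        exact this.map ⟨Subtype.val, fun {x y} h => Or.inl ⟨x, y, h, rfl, rfl⟩⟩
    intro a b
    exact ((key a).symm.trans (key b))
  · intro x c hc
    by_cases hv : v0 ∈ c.support
    · -- rotate the cycle to start at v0 and derive a contradiction
      have hc' := hc.rotate hv
      set c' := c.rotate _ hv with hc'def
      clear_value c'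
      cases c' with
      | nil => exact SimpleGraph.Walk.IsCycle.not_of_nil hc'
      | @cons _ xx _ h q =>
        have hxx : xx = (u : V) := (addLeafAux_adj_v0 xx).1 h
        have hxne : xx ≠ v0 := by
          rw [hxx]; exact u.2
        have hqlen : 0 < q.length := by
          have := hc'.three_le_length
          rw [SimpleGraph.Walk.length_cons] at this
          omega
        have hqrevnil : ¬ q.reverse.Nil := by
          rw [SimpleGraph.Walk.nil_iff_length_eq, SimpleGraph.Walk.length_reverse]
          omega
        obtain ⟨z, h', q', hq⟩ := SimpleGraph.Walk.not_nil_iff.mp hqrevnil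
        have hz : z = (u : V) := (addLeafAux_adj_v0 z).1 h'
        have hmem : s(v0, z) ∈ q.edges := by
          have : s(v0, z) ∈ q.reverse.edges := by
            rw [hq]; simp
          rwa [SimpleGraph.Walk.edges_reverse, List.mem_reverse] at this
        have hnodup := hc'.edges_nodup
        rw [SimpleGraph.Walk.edges_cons, List.nodup_cons] at hnodup
        exact hnodup.1 (by rwa [show s(v0, xx) = s(v0, z) by rw [hxx, hz]])
    · -- the cycle avoids v0, transfer it to H
      have hx : x ≠ v0 := fun h => hv (h ▸ c.start_mem_support)
      have hcyc : (liftWalk c hx hx hv).IsCycle := by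
        rw [← liftWalk_map c hx hx hv] at hc
        exact (SimpleGraph.Walk.map_isCycle_iff_of_injective Subtype.val_injective).1 hc
      have hH' := hH.IsAcyclic
      rw [← comap_addLeafAux (v0 := v0) H u] at hH'
      exact hH' _ hcyc

lemma degree_addLeafAux_v0 {H : SimpleGraph {v : V // v ≠ v0}} {u : {v : V // v ≠ v0}} :
    (addLeafAux v0 H u).degree v0 = 1 := by
  have : (addLeafAux v0 H u).neighborFinset v0 = {(u : V)} := by
    ext z; simp [SimpleGraph.mem_neighborFinset, addLeafAux_adj_v0]
  rw [SimpleGraph.degree, this, Finset.card_singleton]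

lemma degree_addLeafAux_coe {H : SimpleGraph {v : V // v ≠ v0}} {u : {v : V // v ≠ v0}}
    (w : {v : V // v ≠ v0}) :
    (addLeafAux v0 H u).degree (w : V) = H.degree w + (if w = u then 1 else 0) := by
  have hNF : (addLeafAux v0 H u).neighborFinset (w : V) =
      (H.neighborFinset w).image (Subtype.val) ∪ (if w = u then {v0} else ∅) := by
    ext z
    simp only [SimpleGraph.mem_neighborFinset, Finset.mem_union, Finset.mem_image,
      addLeafAux_adj]
    constructor
    · rintro (⟨x, y, h, hx, hy⟩ | ⟨h1, _⟩ | ⟨h1, h2⟩)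
      · exact Or.inl ⟨y, by rwa [show x = w from Subtype.ext hx] at h, hy⟩
      · exact absurd h1 w.2
      · have hwu : w = u := Subtype.ext h2
        refine Or.inr ?_
        rw [if_pos hwu, Finset.mem_singleton]
        exact h1
    · rintro (⟨y, h, hy⟩ | hz)
      · exact Or.inl ⟨w, y, h, rfl, hy⟩
      · by_cases hwu : w = u
        · rw [if_pos hwu, Finset.mem_singleton] at hz
          exact Or.inr (Or.inr ⟨hz, by rw [hwu]⟩)
        · simp [hwu] at hz
  rw [SimpleGraph.degree, hNF, Finset.card_union_of_disjoint, Finset.card_image_of_injective _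
    Subtype.val_injective]
  · congr 1
    by_cases hwu : w = u <;> simp [hwu]
  · rw [Finset.disjoint_right]
    intro z hz hz'
    obtain ⟨y, _, hy⟩ := Finset.mem_image.1 hz'
    by_cases hwu : w = u
    · rw [if_pos hwu, Finset.mem_singleton] at hz
      exact y.2 (by rw [hy, hz])
    · simp [hwu] at hz

lemma addLeafAux_comap_eq {G : SimpleGraph V} {u : {v : V // v ≠ v0}}
    (hu : ∀ w, G.Adj v0 w ↔ w = (u : V)) :
    addLeafAux v0 (SimpleGraph.comap (Subtype.val : {v : V // v ≠ v0} → V) G) u = G := by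
  ext a b
  rw [addLeafAux_adj]
  constructor
  · rintro (⟨x, y, h, hx, hy⟩ | ⟨h1, h2⟩ | ⟨h1, h2⟩)
    · have h' : G.Adj (x : V) (y : V) := h
      rwa [hx, hy] at h'
    · rw [h1, h2]; exact (hu (u : V)).2 rfl
    · rw [h1, h2]; exact ((hu (u : V)).2 rfl).symm
  · intro h
    by_cases ha : a = v0
    · subst ha; exact Or.inr (Or.inl ⟨rfl, (hu b).1 h⟩)
    · by_cases hb : b = v0
      · subst hb; exact Or.inr (Or.inr ⟨rfl, (hu a).1 h.symm⟩)
      · exact Or.inl ⟨⟨a, ha⟩, ⟨b, hb⟩, h, rfl, rfl⟩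

end Trees
end CayleyAux3


noncomputable section CayleyAux4
variable {V : Type} [Fintype V] [DecidableEq V]

lemma isAcyclic_of_card_le_two (h : Fintype.card V ≤ 2) (G : SimpleGraph V) : G.IsAcyclic := by
  intro v c hc
  have h3 := hc.three_le_length
  have hn : c.support.tail.Nodup := hc.support_nodup
  have hlen : c.support.tail.length = c.length := by
    rw [List.length_tail, c.length_support]
    omega
  have := hn.length_le_card
  omega

lemma top_degree_eq (v : V) : (⊤ : SimpleGraph V).degree v = Fintype.card V - 1 := by
  have : (⊤ : SimpleGraph V).neighborFinset v = univ.erase v := by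
    ext w
    simp [SimpleGraph.mem_neighborFinset, Finset.mem_erase, ne_comm]
  rw [SimpleGraph.degree, this, Finset.card_erase_of_mem (mem_univ v), card_univ]

lemma top_isTree_of_card_le_two (h0 : 0 < Fintype.card V) (h : Fintype.card V ≤ 2) :
    (⊤ : SimpleGraph V).IsTree := by
  constructor
  · rw [SimpleGraph.connected_iff]
    refine ⟨fun a b => ?_, Fintype.card_pos_iff.1 h0⟩
    by_cases hab : a = b
    · exact hab ▸ SimpleGraph.Reachable.refl a
    · exact SimpleGraph.Adj.reachable (by simp [hab])
  · exact isAcyclic_of_card_le_two h _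

lemma eq_of_card_two (hV : Fintype.card V = 2) {a x y : V} (hx : x ≠ a) (hy : y ≠ a) :
    x = y := by
  by_contra hxy
  have h3 : ({x, y, a} : Finset V).card = 3 := by
    rw [Finset.card_insert_of_notMem (by simp [hxy, hx]),
      Finset.card_insert_of_notMem (by simp [hy]), Finset.card_singleton]
  have := Finset.card_le_univ ({x, y, a} : Finset V)
  rw [h3, hV] at this
  omega

lemma isTree_card_two (hV : Fintype.card V = 2) {G : SimpleGraph V} (hT : G.IsTree) :
    G = ⊤ := by
  ext a b
  simp only [SimpleGraph.top_adj]
  constructor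
  · exact fun h => G.ne_of_adj h
  · intro hab
    obtain ⟨p⟩ := hT.isConnected.preconnected a b
    cases p with
    | nil => exact absurd rfl hab
    | @cons _ c _ h q =>
      have : c = b := eq_of_card_two hV (a := a) h.ne' (Ne.symm hab)
      rwa [← this]

/-- The unique neighbour of `v0`, as an element of the vertex set minus `v0`. -/
def nbrAux (v0 : V) [Nonempty {v : V // v ≠ v0}] (G : SimpleGraph V) : {v : V // v ≠ v0} :=
  if h : ∃ u : {v : V // v ≠ v0}, G.Adj v0 (u : V) then h.choose else Classical.arbitrary _

lemma nbrAux_spec {v0 : V} [Nonempty {v : V // v ≠ v0}] {G : SimpleGraph V}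
    (h1 : G.degree v0 = 1) : ∀ w, G.Adj v0 w ↔ w = ((nbrAux v0 G : {v : V // v ≠ v0}) : V) := by
  obtain ⟨u', hu'1, hu'2⟩ := exists_unique_nbr h1
  have hex' : ∃ u : {v : V // v ≠ v0}, G.Adj v0 (u : V) := ⟨⟨u', hu'1⟩, (hu'2 u').2 rfl⟩
  have hch : G.Adj v0 ((hex'.choose : {v : V // v ≠ v0}) : V) := hex'.choose_spec
  have heq : ((hex'.choose : {v : V // v ≠ v0}) : V) = u' := (hu'2 _).1 hch
  intro w
  rw [hu'2 w, show nbrAux v0 G = hex'.choose from dif_pos hex', heq]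

lemma nbrAux_eq {v0 : V} [Nonempty {v : V // v ≠ v0}] {G : SimpleGraph V}
    (h1 : G.degree v0 = 1) {u : {v : V // v ≠ v0}} (hadj : G.Adj v0 (u : V)) :
    nbrAux v0 G = u :=
  (Subtype.ext ((nbrAux_spec h1 (u : V)).1 hadj)).symm

/-- The last value of `f`, as an element of the vertex set minus `v0`. -/
def lastAux (v0 : V) [Nonempty {v : V // v ≠ v0}] {m : ℕ} (f : Fin (m + 1) → V) :
    {v : V // v ≠ v0} :=
  if h : f (Fin.last m) ≠ v0 then ⟨f (Fin.last m), h⟩ else Classical.arbitrary _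

/-- Restriction of `f` to the first `m` coordinates, as a map into the vertex set minus `v0`. -/
def restAux (v0 : V) [Nonempty {v : V // v ≠ v0}] {m : ℕ} (f : Fin (m + 1) → V)
    (j : Fin m) : {v : V // v ≠ v0} :=
  if h : f (Fin.castSucc j) ≠ v0 then ⟨f (Fin.castSucc j), h⟩ else Classical.arbitrary _

end CayleyAux4
noncomputable section CayleyClaim

open Finset SimpleGraph

theorem claimC : ∀ (m : ℕ) (V : Type) [Fintype V] [DecidableEq V],
    Fintype.card V = m + 2 → ∀ d : V → ℕ,
    #((univ : Finset (SimpleGraph V)).filter fun G => G.IsTree ∧ ∀ v, G.degree v = d v) =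
    #((univ : Finset (Fin m → V)).filter fun f => ∀ v, cntAux f v + 1 = d v) := by
  intro m
  induction m with
  | zero =>
    intro V _ _ hV d
    have hcard0 : Fintype.card (Fin 0 → V) = 1 := by simp
    have hcnt0 : ∀ (f : Fin 0 → V) (v : V), cntAux f v = 0 := by
      intro f v
      simp [cntAux]
    by_cases hd : ∀ v, d v = 1
    · have htree : ((univ : Finset (SimpleGraph V)).filter
          fun G => G.IsTree ∧ ∀ v, G.degree v = d v) = {⊤} := by
        ext G
        simp only [mem_filter, mem_univ, true_and, Finset.mem_singleton]
        constructor
        · rintro ⟨hT, _⟩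
          exact isTree_card_two hV hT
        · rintro rfl
          refine ⟨top_isTree_of_card_le_two (by omega) (by omega), fun v => ?_⟩
          have h := top_degree_eq (V := V) v
          rw [hV] at h
          rw [hd v]
          convert h using 2
      have hfun : ((univ : Finset (Fin 0 → V)).filter
          fun f => ∀ v, cntAux f v + 1 = d v) = univ := by
        apply Finset.filter_true_of_mem
        intro f _ v
        rw [hcnt0, hd v]
      rw [htree, hfun, Finset.card_singleton, card_univ, hcard0]
    · push_neg at hd
      obtain ⟨v1, hv1⟩ := hd
      have htree : ((univ : Finset (SimpleGraph V)).filter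
          fun G => G.IsTree ∧ ∀ v, G.degree v = d v) = ∅ := by
        rw [Finset.filter_eq_empty_iff]
        rintro G - ⟨hT, hdeg⟩
        have h1 : 0 < G.degree v1 :=
          degree_pos_of_connected hT.isConnected (by omega) v1
        have h2 : G.degree v1 < Fintype.card V := G.degree_lt_card_verts v1
        have := hdeg v1
        omega
      have hfun : ((univ : Finset (Fin 0 → V)).filter
          fun f => ∀ v, cntAux f v + 1 = d v) = ∅ := by
        rw [Finset.filter_eq_empty_iff]
        rintro f - h
        have := h v1
        rw [hcnt0] at this
        omega
      rw [htree, hfun]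
      simp
  | succ m ih =>
    intro V _ _ hV d
    by_cases hex : ∃ v0, d v0 = 1
    · obtain ⟨v0, hd0⟩ := hex
      have hV'aux : Fintype.card {v : V // v ≠ v0} = Fintype.card V - 1 := by
        have h := Fintype.card_subtype_compl (fun v : V => v = v0)
        rw [Fintype.card_subtype_eq] at h
        exact h
      have hV' : Fintype.card {v : V // v ≠ v0} = m + 2 := by omega
      haveI hNe : Nonempty {v : V // v ≠ v0} := Fintype.card_pos_iff.1 (by omega)
      -- fiberwise decomposition on both sides
      rw [Finset.card_eq_sum_card_fiberwise
            (f := nbrAux v0) (t := (univ : Finset {v : V // v ≠ v0})) (fun _ _ => mem_univ _),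
          Finset.card_eq_sum_card_fiberwise
            (f := lastAux v0) (t := (univ : Finset {v : V // v ≠ v0})) (fun _ _ => mem_univ _)]
      apply Finset.sum_congr rfl
      intro u _
      have htree : #(((univ : Finset (SimpleGraph V)).filter
              fun G => G.IsTree ∧ ∀ v, G.degree v = d v).filter
              fun G => nbrAux v0 G = u) =
          #((univ : Finset (SimpleGraph {v : V // v ≠ v0})).filter
              fun H => H.IsTree ∧ ∀ w, H.degree w = d w.val - if w = u then 1 else 0) := by
        rw [Finset.filter_filter]
        apply Finset.card_nbij'
          (i := SimpleGraph.comap (Subtype.val : {v : V // v ≠ v0} → V))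
          (j := fun H => addLeafAux v0 H u)
        · intro G hG
          simp only [mem_coe, mem_filter, mem_univ, true_and] at hG ⊢
          obtain ⟨⟨hT, hdeg⟩, hnbr⟩ := hG
          have h1 : G.degree v0 = 1 := by rw [hdeg v0, hd0]
          have hu := nbrAux_spec h1
          rw [hnbr] at hu
          exact ⟨isTree_comap hT hu, fun w => by rw [← hdeg]; convert degree_comap_of_leaf hu w using 2⟩
        · intro H hH
          simp only [mem_coe, mem_filter, mem_univ, true_and] at hH ⊢
          obtain ⟨hT, hdeg⟩ := hH
          have hdu : 2 ≤ d (u : V) := by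
            have h0 : 0 < H.degree u :=
              degree_pos_of_connected hT.isConnected (by omega) u
            have := hdeg u
            rw [if_pos rfl] at this
            omega
          have hdegv0 : (addLeafAux v0 H u).degree v0 = 1 := degree_addLeafAux_v0
          refine ⟨⟨isTree_addLeafAux hT, ?_⟩, ?_⟩
          · intro v
            by_cases hv : v = v0
            · subst hv; rw [hdegv0, hd0]
            · rw [show (addLeafAux v0 H u).degree v = H.degree ⟨v, hv⟩ +
                  (if (⟨v, hv⟩ : {v : V // v ≠ v0}) = u then 1 else 0)
                  from degree_addLeafAux_coe ⟨v, hv⟩, hdeg ⟨v, hv⟩]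
              rw [show ((⟨v, hv⟩ : {v : V // v ≠ v0}) : V) = v from rfl]
              by_cases hvu : (⟨v, hv⟩ : {v : V // v ≠ v0}) = u
              · rw [if_pos hvu]
                have hvq : v = (u : V) := congrArg Subtype.val hvu
                rw [hvq]
                omega
              · rw [if_neg hvu]
                omega
          · exact nbrAux_eq hdegv0 ((addLeafAux_adj_v0 (u : V)).2 rfl)
        · intro G hG
          simp only [mem_coe, mem_filter, mem_univ, true_and] at hG
          obtain ⟨⟨hT, hdeg⟩, hnbr⟩ := hG
          have h1 : G.degree v0 = 1 := by rw [hdeg v0, hd0]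
          have hu := nbrAux_spec h1
          rw [hnbr] at hu
          exact addLeafAux_comap_eq hu
        · intro H _
          exact comap_addLeafAux H u
      have hfun : #(((univ : Finset (Fin (m + 1) → V)).filter
              fun f => ∀ v, cntAux f v + 1 = d v).filter
              fun f => lastAux v0 f = u) =
          #((univ : Finset (Fin m → {v : V // v ≠ v0})).filter
              fun f' => ∀ w, cntAux f' w + 1 = d w.val - if w = u then 1 else 0) := by
        rw [Finset.filter_filter]
        apply Finset.card_nbij' (i := restAux v0)
          (j := fun f' => Fin.snoc (fun j => ((f' j : {v : V // v ≠ v0}) : V)) ((u : V)))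
        · intro f hf
          simp only [mem_coe, mem_filter, mem_univ, true_and] at hf ⊢
          obtain ⟨hmem, hlast⟩ := hf
          have hav : ∀ j, f j ≠ v0 := by
            apply (cntAux_eq_zero_iff f v0).1
            have := hmem v0
            rw [hd0] at this
            omega
          have hrest : ∀ j : Fin m, ((restAux v0 f j : {v : V // v ≠ v0}) : V) =
              f (Fin.castSucc j) := by
            intro j
            rw [show restAux v0 f j = ⟨f (Fin.castSucc j), hav _⟩ from dif_pos (hav _)]
          have hlastv : f (Fin.last m) = (u : V) := by
            rw [show lastAux v0 f = ⟨f (Fin.last m), hav _⟩ from dif_pos (hav _)] at hlast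
            exact congrArg Subtype.val hlast
          have hsnoc : Fin.snoc (fun j => ((restAux v0 f j : {v : V // v ≠ v0}) : V))
              ((u : V)) = f := by
            have h1 : (fun j => ((restAux v0 f j : {v : V // v ≠ v0}) : V)) = Fin.init f := by
              funext j
              rw [show restAux v0 f j = ⟨f (Fin.castSucc j), hav _⟩ from dif_pos (hav _)]
              rfl
            rw [h1, ← hlastv]
            exact Fin.snoc_init_self f
          have hcnt : ∀ v, cntAux f v =
              cntAux (fun j => ((restAux v0 f j : {v : V // v ≠ v0}) : V)) v +
                if (u : V) = v then 1 else 0 := by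
            intro v
            have h2 := cntAux_snoc (fun j => ((restAux v0 f j : {v : V // v ≠ v0}) : V))
              ((u : V)) v
            rw [hsnoc] at h2
            exact h2
          intro w
          have hm := hmem (w : V)
          rw [hcnt (w : V), cntAux_val] at hm
          by_cases hwu : w = u
          · subst hwu
            rw [if_pos rfl] at hm
            rw [if_pos rfl]
            omega
          · rw [if_neg (fun h => hwu (Subtype.ext h.symm) : ¬((u : V) = (w : V)))] at hm
            rw [if_neg hwu]
            omega
        · intro f' hf'
          simp only [mem_coe, mem_filter, mem_univ, true_and] at hf' ⊢
          constructor
          · intro v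
            have hc := cntAux_snoc (fun j => ((f' j : {v : V // v ≠ v0}) : V)) ((u : V)) v
            rw [hc]
            by_cases hv : v = v0
            · rw [hv, cntAux_val_v0, if_neg (u.2 : ¬((u : V) = v0)), hd0]
            · have hm := hf' ⟨v, hv⟩
              have hcoe : ((⟨v, hv⟩ : {v : V // v ≠ v0}) : V) = v := rfl
              rw [hcoe] at hm
              rw [show cntAux (fun j => ((f' j : {v : V // v ≠ v0}) : V)) v =
                cntAux f' ⟨v, hv⟩ from cntAux_val f' ⟨v, hv⟩]
              by_cases hvu : (⟨v, hv⟩ : {v : V // v ≠ v0}) = u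
              · rw [if_pos ((congrArg Subtype.val hvu).symm : (u : V) = v)]
                rw [if_pos hvu] at hm
                omega
              · rw [if_neg (fun h => hvu (Subtype.ext h.symm) : ¬((u : V) = v))]
                rw [if_neg hvu] at hm
                omega
          · have hl : (Fin.snoc (fun j => ((f' j : {v : V // v ≠ v0}) : V)) ((u : V)) :
                Fin (m + 1) → V) (Fin.last m) = (u : V) := by simp
            have hln : (Fin.snoc (fun j => ((f' j : {v : V // v ≠ v0}) : V)) ((u : V)) :
                Fin (m + 1) → V) (Fin.last m) ≠ v0 := by rw [hl]; exact u.2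
            exact (show lastAux v0 (Fin.snoc (fun j => ((f' j : {v : V // v ≠ v0}) : V)) ((u : V)))
              = ⟨_, hln⟩ from dif_pos hln).trans (Subtype.ext hl)
        · intro f hf
          simp only [mem_coe, mem_filter, mem_univ, true_and] at hf
          obtain ⟨hmem, hlast⟩ := hf
          have hav : ∀ j, f j ≠ v0 := by
            apply (cntAux_eq_zero_iff f v0).1
            have := hmem v0
            rw [hd0] at this
            omega
          have hlastv : f (Fin.last m) = (u : V) := by
            rw [show lastAux v0 f = ⟨f (Fin.last m), hav _⟩ from dif_pos (hav _)] at hlast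
            exact congrArg Subtype.val hlast
          have h1 : (fun j => ((restAux v0 f j : {v : V // v ≠ v0}) : V)) = Fin.init f := by
            funext j
            rw [show restAux v0 f j = ⟨f (Fin.castSucc j), hav _⟩ from dif_pos (hav _)]
            rfl
          dsimp only
          rw [h1, ← hlastv]
          exact Fin.snoc_init_self f
        · intro f' _
          funext j
          have hne : (Fin.snoc (fun j => ((f' j : {v : V // v ≠ v0}) : V)) ((u : V)) :
              Fin (m + 1) → V) (Fin.castSucc j) ≠ v0 := by
            rw [Fin.snoc_castSucc]
            exact (f' j).2
          exact (show restAux v0 (Fin.snoc (fun j => ((f' j : {v : V // v ≠ v0}) : V)) ((u : V))) j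
            = ⟨_, hne⟩ from dif_pos hne).trans (Subtype.ext (by simp))
      exact htree.trans ((ih {v : V // v ≠ v0} hV'
        (fun w => d w.val - if w = u then 1 else 0)).trans hfun.symm)
    · push_neg at hex
      have htree : ((univ : Finset (SimpleGraph V)).filter
          fun G => G.IsTree ∧ ∀ v, G.degree v = d v) = ∅ := by
        rw [Finset.filter_eq_empty_iff]
        rintro G - ⟨hT, hdeg⟩
        have hb : ∀ v : V, 2 ≤ G.degree v := by
          intro v
          have h1 : 0 < G.degree v :=
            degree_pos_of_connected hT.isConnected (by omega) v
          have h2 := hdeg v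
          have h3 := hex v
          omega
        have hsum := G.sum_degrees_eq_twice_card_edges
        have hcard := hT.card_edgeFinset
        have hge : (univ : Finset V).card * 2 ≤ ∑ v, G.degree v :=
          Finset.card_nsmul_le_sum univ _ 2 (fun v _ => hb v)
        rw [card_univ] at hge
        omega
      have hfun : ((univ : Finset (Fin (m + 1) → V)).filter
          fun f => ∀ v, cntAux f v + 1 = d v) = ∅ := by
        rw [Finset.filter_eq_empty_iff]
        rintro f - h
        have hb : ∀ v : V, 1 ≤ cntAux f v := by
          intro v
          have h1 := h v
          have h2 := hex v
          omega
        have hsum := sum_cntAux f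
        have hge : (univ : Finset V).card * 1 ≤ ∑ v, cntAux f v :=
          Finset.card_nsmul_le_sum univ _ 1 (fun v _ => hb v)
        rw [card_univ] at hge
        omega
      rw [htree, hfun]
      simp

end CayleyClaim
set_option maxHeartbeats 2000000

noncomputable section CayleyGlue

open Finset SimpleGraph

lemma sum_eq_of_fiber_card_eq {α β γ M : Type*} [DecidableEq γ] [AddCommMonoid M]
    (s : Finset α) (t : Finset β) (wa : α → γ) (wb : β → γ) (F : γ → M)
    (h : ∀ c : γ, #(s.filter fun a => wa a = c) = #(t.filter fun b => wb b = c)) :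
    ∑ a ∈ s, F (wa a) = ∑ b ∈ t, F (wb b) := by
  classical
  rw [← Finset.sum_fiberwise_of_maps_to (g := wa) (t := s.image wa ∪ t.image wb)
        (fun a ha => Finset.mem_union_left _ (Finset.mem_image_of_mem _ ha)) (fun a => F (wa a)),
      ← Finset.sum_fiberwise_of_maps_to (g := wb) (t := s.image wa ∪ t.image wb)
        (fun b hb => Finset.mem_union_right _ (Finset.mem_image_of_mem _ hb)) (fun b => F (wb b))]
  apply Finset.sum_congr rfl
  intro c _
  have h1 : ∑ a ∈ s.filter (fun a => wa a = c), F (wa a) =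
      #(s.filter fun a => wa a = c) • F c := by
    rw [Finset.sum_congr rfl (fun a ha => by rw [(Finset.mem_filter.1 ha).2]),
      Finset.sum_const]
  have h2 : ∑ b ∈ t.filter (fun b => wb b = c), F (wb b) =
      #(t.filter fun b => wb b = c) • F c := by
    rw [Finset.sum_congr rfl (fun b hb => by rw [(Finset.mem_filter.1 hb).2]),
      Finset.sum_const]
  rw [h1, h2, h c]

end CayleyGlue

/-- **Refined Cayley formula.**
For `n ≥ 2`, the generating polynomial of Cayley trees (connected acyclic simple
graphs on the vertex set `Fin n`) counted according to the degrees of their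
vertices is `x_1 ⋯ x_n (x_1 + ⋯ + x_n)^(n-2)`. -/
theorem cayley_degree_generating_function (n : ℕ) (hn : 2 ≤ n) :
    ∑ G ∈ Finset.univ.filter (fun G : SimpleGraph (Fin n) => G.IsTree),
        ∏ i : Fin n, (MvPolynomial.X i : MvPolynomial (Fin n) ℤ) ^ G.degree i
      =
    (∏ i : Fin n, (MvPolynomial.X i : MvPolynomial (Fin n) ℤ)) *
      (∑ i : Fin n, (MvPolynomial.X i : MvPolynomial (Fin n) ℤ)) ^ (n - 2) := by
  classical
  have hcard : Fintype.card (Fin n) = (n - 2) + 2 := by rw [Fintype.card_fin]; omega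
  have hmain : ∑ G ∈ Finset.univ.filter (fun G : SimpleGraph (Fin n) => G.IsTree),
      ∏ i : Fin n, (MvPolynomial.X i : MvPolynomial (Fin n) ℤ) ^ G.degree i
      = ∑ f ∈ (Finset.univ : Finset (Fin (n - 2) → Fin n)),
          ∏ i : Fin n, (MvPolynomial.X i : MvPolynomial (Fin n) ℤ) ^ (cntAux f i + 1) := by
    have hfib : ∀ c : Fin n → ℕ,
        #((Finset.univ.filter (fun G : SimpleGraph (Fin n) => G.IsTree)).filter
            (fun G => (fun v => G.degree v) = c)) =
        #((Finset.univ : Finset (Fin (n - 2) → Fin n)).filter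
            (fun f => (fun v => cntAux f v + 1) = c)) := ?_
    · exact sum_eq_of_fiber_card_eq
        (Finset.univ.filter (fun G : SimpleGraph (Fin n) => G.IsTree))
        (Finset.univ : Finset (Fin (n - 2) → Fin n))
        (fun G => fun v => G.degree v) (fun f => fun v => cntAux f v + 1)
        (fun c => ∏ i, (MvPolynomial.X i : MvPolynomial (Fin n) ℤ) ^ c i) hfib
    intro c
    have hc := claimC (n - 2) (Fin n) hcard c
    have e1 : (Finset.univ.filter (fun G : SimpleGraph (Fin n) => G.IsTree)).filter
        (fun G => (fun v => G.degree v) = c) =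
        Finset.univ.filter (fun G : SimpleGraph (Fin n) =>
          G.IsTree ∧ ∀ v, G.degree v = c v) := by
      rw [Finset.filter_filter]
      apply Finset.filter_congr
      intro G _
      constructor
      · rintro ⟨h1, h2⟩; exact ⟨h1, fun v => congrFun h2 v⟩
      · rintro ⟨h1, h2⟩; exact ⟨h1, funext h2⟩
    have e2 : (Finset.univ : Finset (Fin (n - 2) → Fin n)).filter
        (fun f => (fun v => cntAux f v + 1) = c) =
        (Finset.univ : Finset (Fin (n - 2) → Fin n)).filter
          (fun f => ∀ v, cntAux f v + 1 = c v) := by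
      apply Finset.filter_congr
      intro f _
      constructor
      · intro h; exact fun v => congrFun h v
      · intro h; exact funext h
    rw [e1, e2]; convert hc using 3
  refine hmain.trans ?_
  have h1 : ((∑ i : Fin n, (MvPolynomial.X i : MvPolynomial (Fin n) ℤ)) ^ (n - 2)) =
      ∑ f ∈ (Finset.univ : Finset (Fin (n - 2) → Fin n)), ∏ j : Fin (n - 2),
        (MvPolynomial.X (f j) : MvPolynomial (Fin n) ℤ) := by
    calc ((∑ i : Fin n, (MvPolynomial.X i : MvPolynomial (Fin n) ℤ)) ^ (n - 2))
        = ∏ _j : Fin (n - 2), (∑ i : Fin n, (MvPolynomial.X i : MvPolynomial (Fin n) ℤ)) := by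
          rw [Finset.prod_const, Finset.card_univ, Fintype.card_fin]
      _ = ∑ f ∈ Fintype.piFinset (fun _ : Fin (n - 2) => (Finset.univ : Finset (Fin n))),
            ∏ j : Fin (n - 2), (MvPolynomial.X (f j) : MvPolynomial (Fin n) ℤ) :=
          Finset.prod_univ_sum _ _
      _ = ∑ f ∈ (Finset.univ : Finset (Fin (n - 2) → Fin n)), ∏ j : Fin (n - 2),
            (MvPolynomial.X (f j) : MvPolynomial (Fin n) ℤ) := by
          rw [Fintype.piFinset_univ]
  have h2 : ∀ f : Fin (n - 2) → Fin n,
      (∏ j : Fin (n - 2), (MvPolynomial.X (f j) : MvPolynomial (Fin n) ℤ)) =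
      ∏ v : Fin n, (MvPolynomial.X v : MvPolynomial (Fin n) ℤ) ^ cntAux f v := by
    intro f
    rw [← Finset.prod_fiberwise (Finset.univ : Finset (Fin (n - 2))) f
      (fun j => (MvPolynomial.X (f j) : MvPolynomial (Fin n) ℤ))]
    apply Finset.prod_congr rfl
    intro v _
    rw [show ∏ j ∈ Finset.univ.filter (fun j => f j = v),
        (MvPolynomial.X (f j) : MvPolynomial (Fin n) ℤ) =
        ∏ _j ∈ Finset.univ.filter (fun j => f j = v),
        (MvPolynomial.X v : MvPolynomial (Fin n) ℤ) from
      Finset.prod_congr rfl (fun j hj => by rw [(Finset.mem_filter.1 hj).2]),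
      Finset.prod_const]
    rfl
  rw [h1, Finset.mul_sum]
  apply Finset.sum_congr rfl
  intro f _
  rw [h2 f, ← Finset.prod_mul_distrib]
  apply Finset.prod_congr rfl
  intro v _
  rw [pow_succ']
end

section
/- Let n ≥ 2 and let γ = (γ_1,…,γ_n) be a tuple of positive integers summing to 2n−2. Let i ≠ j in {1,…,n} and let γ' = (γ'_1,…,γ'_n) be defined by γ'_i = γ_i − 1, γ'_j = γ_j + 1, and γ'_k = γ_k for k ∉ {i,j}. Then (γ_i − 1)·|T_γ| = (γ'_j − 1)·|T_{γ'}|, where |·| denotes cardinality. -/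
open scoped Classical

namespace CayleyMoveAux

open SimpleGraph Finset

variable {V : Type*}

noncomputable def move (T : SimpleGraph V) (a b x : V) : SimpleGraph V :=
  T.deleteEdges {s(a, x)} ⊔ SimpleGraph.edge b x

lemma tree_bridge {T : SimpleGraph V} (hT : T.IsTree) {u v : V} (h : T.Adj u v) :
    ¬ (T.deleteEdges {s(u, v)}).Reachable u v := by
  have hb : T.IsBridge s(u, v) := (isAcyclic_iff_forall_adj_isBridge.mp hT.IsAcyclic) h
  rw [isBridge_iff] at hb
  exact hb

lemma not_adj_bx {T : SimpleGraph V} (hT : T.IsTree) {a b x : V} (hab : a ≠ b)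
    (hax : T.Adj a x) (hre : (T.deleteEdges {s(a, x)}).Reachable a b) :
    ¬ T.Adj b x := by
  intro hbx
  have h1 : (T.deleteEdges {s(a, x)}).Adj b x := by
    rw [deleteEdges_adj]
    refine ⟨hbx, ?_⟩
    simp only [Set.mem_singleton_iff, Sym2.eq_iff]
    rintro (⟨rfl, -⟩ | ⟨rfl, rfl⟩)
    · exact hab rfl
    · exact hbx.ne rfl
  exact tree_bridge hT hax (hre.trans h1.reachable)

lemma x_ne_b {T : SimpleGraph V} (hT : T.IsTree) {a b x : V}
    (hax : T.Adj a x) (hre : (T.deleteEdges {s(a, x)}).Reachable a b) : x ≠ b := by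
  rintro rfl
  exact tree_bridge hT hax hre

lemma move_adj {T : SimpleGraph V} {a b x : V} (hab : a ≠ b) (hxa : x ≠ a) (hxb : x ≠ b)
    {v w : V} :
    (move T a b x).Adj v w ↔
      (T.Adj v w ∧ ¬(v = a ∧ w = x) ∧ ¬(v = x ∧ w = a)) ∨
        ((v = b ∧ w = x) ∨ (v = x ∧ w = b)) := by
  simp only [move, sup_adj, deleteEdges_adj, Set.mem_singleton_iff, Sym2.eq_iff, edge_adj]
  constructor
  · rintro (⟨h, h2⟩ | ⟨h, hne⟩)
    · exact Or.inl ⟨h, by tauto⟩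
    · tauto
  · rintro (⟨h, h2, h3⟩ | (⟨rfl, rfl⟩ | ⟨rfl, rfl⟩))
    · exact Or.inl ⟨h, by tauto⟩
    · exact Or.inr ⟨by tauto, hxb.symm⟩
    · exact Or.inr ⟨by tauto, hxb⟩

lemma move_deleteEdges {T : SimpleGraph V} {a b x : V} (hab : a ≠ b) (hxa : x ≠ a)
    (hbx : ¬ T.Adj b x) :
    (move T a b x).deleteEdges {s(b, x)} = T.deleteEdges {s(a, x)} := by
  ext v w
  simp only [deleteEdges_adj, move, sup_adj, Set.mem_singleton_iff, Sym2.eq_iff, edge_adj]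
  constructor
  · rintro ⟨(⟨h, h2⟩ | ⟨h2, hne⟩), h3⟩
    · exact ⟨h, h2⟩
    · tauto
  · rintro ⟨h, h2⟩
    refine ⟨Or.inl ⟨h, h2⟩, ?_⟩
    rintro (⟨rfl, rfl⟩ | ⟨rfl, rfl⟩)
    · exact hbx h
    · exact hbx h.symm

lemma move_move {T : SimpleGraph V} {a b x : V} (hab : a ≠ b) (hxa : x ≠ a)
    (hax : T.Adj a x) (hbx : ¬ T.Adj b x) :
    move (move T a b x) b a x = T := by
  rw [move, move_deleteEdges hab hxa hbx]
  ext v w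
  simp only [sup_adj, deleteEdges_adj, Set.mem_singleton_iff, Sym2.eq_iff, edge_adj]
  constructor
  · rintro (⟨h, _⟩ | ⟨(⟨rfl, rfl⟩ | ⟨rfl, rfl⟩), hne⟩)
    · exact h
    · exact hax
    · exact hax.symm
  · intro h
    by_cases h2 : v = a ∧ w = x ∨ v = x ∧ w = a
    · exact Or.inr ⟨h2, h.ne⟩
    · exact Or.inl ⟨h, h2⟩

lemma move_adj_bx {T : SimpleGraph V} {a b x : V} (hab : a ≠ b) (hxa : x ≠ a) (hxb : x ≠ b) :
    (move T a b x).Adj b x := by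
  rw [move_adj hab hxa hxb]; tauto

lemma reachable_step {G H : SimpleGraph V} (h : ∀ v w, G.Adj v w → H.Reachable v w)
    {u v : V} (hr : G.Reachable u v) : H.Reachable u v := by
  obtain ⟨p⟩ := hr
  induction p with
  | nil => exact Reachable.refl _
  | cons ha q ih => exact (h _ _ ha).trans ih

lemma move_connected {T : SimpleGraph V} (hT : T.IsTree) {a b x : V} (hab : a ≠ b)
    (hax : T.Adj a x) (hre : (T.deleteEdges {s(a, x)}).Reachable a b) :
    (move T a b x).Connected := by
  have hxa : x ≠ a := hax.ne'
  have hxb : x ≠ b := x_ne_b hT hax hre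
  have hle : T.deleteEdges {s(a, x)} ≤ move T a b x := le_sup_left
  have hax' : (move T a b x).Reachable a x :=
    (hre.mono hle).trans (move_adj_bx hab hxa hxb (T := T)).reachable
  have hne : Nonempty V := hT.isConnected.nonempty
  rw [connected_iff]
  refine ⟨fun v w => ?_, hne⟩
  refine reachable_step (fun v w hvw => ?_) (hT.isConnected.preconnected v w)
  by_cases h2 : s(v, w) = s(a, x)
  · rw [Sym2.eq_iff] at h2
    rcases h2 with ⟨rfl, rfl⟩ | ⟨rfl, rfl⟩
    · exact hax'
    · exact hax'.symm
  · refine Reachable.mono hle (Adj.reachable ?_)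
    rw [deleteEdges_adj]
    exact ⟨hvw, by simpa using h2⟩

lemma move_acyclic {T : SimpleGraph V} (hT : T.IsTree) {a b x : V} (hab : a ≠ b)
    (hax : T.Adj a x) (hre : (T.deleteEdges {s(a, x)}).Reachable a b) :
    (move T a b x).IsAcyclic := by
  have hxa : x ≠ a := hax.ne'
  have hxb : x ≠ b := x_ne_b hT hax hre
  have hbxadj : ¬ T.Adj b x := not_adj_bx hT hab hax hre
  intro v c hc
  by_cases hbe : s(b, x) ∈ c.edges
  · have hbr : (move T a b x).IsBridge s(b, x) := by
      rw [isBridge_iff]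
      refine fun hreach => ?_
      rw [move_deleteEdges hab hxa hbxadj] at hreach
      exact tree_bridge hT hax (hre.trans hreach)
    exact ((isBridge_iff_forall_cycle_notMem (move_adj_bx hab hxa hxb)).mp hbr) c hc hbe
  · have hsub : ∀ e ∈ c.edges, e ∈ T.edgeSet := by
      intro e he
      have h1 := c.edges_subset_edgeSet he
      rw [show move T a b x = T.deleteEdges {s(a, x)} ⊔ SimpleGraph.edge b x from rfl,
        edgeSet_sup] at h1
      rcases h1 with h | h
      · exact edgeSet_mono (deleteEdges_le _) h
      · rw [edge_edgeSet_of_ne (Ne.symm hxb)] at h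
        rw [Set.mem_singleton_iff] at h
        exact absurd (h ▸ he) hbe
    exact hT.IsAcyclic (c.transfer T hsub) (hc.transfer hsub)

variable [Fintype V] {T : SimpleGraph V} {a b x : V}

lemma move_nf_a (hab : a ≠ b) (hxa : x ≠ a) (hxb : x ≠ b) :
    (move T a b x).neighborFinset a = (T.neighborFinset a).erase x := by
  ext y
  simp only [mem_neighborFinset, Finset.mem_erase, move_adj hab hxa hxb]
  aesop

lemma move_nf_b (hab : a ≠ b) (hxa : x ≠ a) (hxb : x ≠ b) :
    (move T a b x).neighborFinset b = insert x (T.neighborFinset b) := by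
  ext y
  simp only [mem_neighborFinset, Finset.mem_insert, move_adj hab hxa hxb]
  aesop

lemma move_nf_x (hab : a ≠ b) (hxa : x ≠ a) (hxb : x ≠ b) :
    (move T a b x).neighborFinset x = insert b ((T.neighborFinset x).erase a) := by
  ext y
  simp only [mem_neighborFinset, Finset.mem_insert, Finset.mem_erase, move_adj hab hxa hxb]
  aesop

lemma move_nf_other (hab : a ≠ b) (hxa : x ≠ a) (hxb : x ≠ b) {k : V}
    (hka : k ≠ a) (hkb : k ≠ b) (hkx : k ≠ x) :
    (move T a b x).neighborFinset k = T.neighborFinset k := by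
  ext y
  simp only [mem_neighborFinset, move_adj hab hxa hxb]
  aesop


lemma move_degree (hab : a ≠ b) (hxa : x ≠ a)
    (hxb : x ≠ b) (hax : T.Adj a x) (hbx : ¬ T.Adj b x) (k : V) :
    (move T a b x).degree k =
      if k = a then T.degree a - 1 else if k = b then T.degree b + 1 else T.degree k := by
  simp only [← card_neighborFinset_eq_degree]
  by_cases hka : k = a
  · rw [if_pos hka, hka, move_nf_a hab hxa hxb,
      Finset.card_erase_of_mem (by rwa [mem_neighborFinset])]
  · rw [if_neg hka]
    by_cases hkb : k = b
    · rw [if_pos hkb, hkb, move_nf_b hab hxa hxb,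
        Finset.card_insert_of_notMem (by rwa [mem_neighborFinset])]
    · rw [if_neg hkb]
      by_cases hkx : k = x
      · subst hkx
        have hamem : a ∈ T.neighborFinset k := by rw [mem_neighborFinset]; exact hax.symm
        have hbmem : b ∉ (T.neighborFinset k).erase a := by
          simp only [Finset.mem_erase, mem_neighborFinset]
          rintro ⟨-, h⟩
          exact hbx h.symm
        rw [move_nf_x hab hxa hxb, Finset.card_insert_of_notMem hbmem,
          Finset.card_erase_of_mem hamem,
          Nat.sub_add_cancel (Finset.card_pos.mpr ⟨a, hamem⟩)]
      · rw [move_nf_other hab hxa hxb hka hkb hkx]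

lemma reachable_deleteEdges_iff {G : SimpleGraph V} {s : Set (Sym2 V)} {u v : V} :
    (G.deleteEdges s).Reachable u v ↔ ∃ p : G.Walk u v, ∀ e ∈ p.edges, e ∉ s := by
  constructor
  · rintro ⟨p⟩
    refine ⟨p.map (SimpleGraph.Hom.ofLE (G.deleteEdges_le s)), ?_⟩
    intro e he
    rw [Walk.edges_map] at he
    obtain ⟨e', he', rfl⟩ := List.mem_map.mp he
    have h1 := p.edges_subset_edgeSet he'
    rw [edgeSet_deleteEdges] at h1
    simpa using h1.2
  · rintro ⟨p, hp⟩
    exact ⟨p.toDeleteEdges s hp⟩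

lemma fiber_card [Fintype V] {T : SimpleGraph V} (hT : T.IsTree) {a b : V} (hab : a ≠ b) :
    Nat.card {x : V // T.Adj a x ∧ (T.deleteEdges {s(a, x)}).Reachable a b}
      = T.degree a - 1 := by
  obtain ⟨P, hP, hPuniq⟩ := hT.existsUnique_path a b
  cases P with
  | nil => exact absurd rfl hab
  | @cons _ x₀ _ h q =>
    -- key1 : the path neighbor fails the condition
    have key1 : ¬ (T.deleteEdges {s(a, x₀)}).Reachable a b := by
      intro hr
      rw [reachable_deleteEdges_iff] at hr
      obtain ⟨p, hp⟩ := hr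
      have := hPuniq (p.toPath : T.Walk a b) (p.toPath.isPath)
      have hmem : s(a, x₀) ∈ (Walk.cons h q).edges := by simp
      rw [← this] at hmem
      exact hp _ (Walk.edges_toPath_subset p hmem) rfl
    -- key2 : every other neighbor satisfies it
    have key2 : ∀ x : V, T.Adj a x → x ≠ x₀ → (T.deleteEdges {s(a, x)}).Reachable a b := by
      intro x hx hne
      rw [reachable_deleteEdges_iff]
      refine ⟨Walk.cons h q, ?_⟩
      intro e he
      simp only [Walk.edges_cons, List.mem_cons] at he
      rw [Set.mem_singleton_iff]
      rintro rfl
      rcases he with heq | hmem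
      · rw [Sym2.eq_iff] at heq
        rcases heq with ⟨-, rfl⟩ | ⟨rfl, rfl⟩
        · exact hne rfl
        · exact hx.ne rfl
      · have ha : a ∈ q.support := Walk.fst_mem_support_of_mem_edges q hmem
        rw [Walk.cons_isPath_iff] at hP
        exact hP.2 ha
    have hset : {x : V | T.Adj a x ∧ (T.deleteEdges {s(a, x)}).Reachable a b}
        = ↑((T.neighborFinset a).erase x₀) := by
      ext x
      simp only [Set.mem_setOf_eq, Finset.coe_erase, Set.mem_diff, Set.mem_singleton_iff,
        mem_coe, mem_neighborFinset]
      constructor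
      · rintro ⟨hx, hr⟩
        refine ⟨hx, fun hc => ?_⟩
        subst hc
        exact key1 hr
      · rintro ⟨hx, hne⟩
        exact ⟨hx, key2 x hx hne⟩
    have : Nat.card {x : V // T.Adj a x ∧ (T.deleteEdges {s(a, x)}).Reachable a b}
        = ((T.neighborFinset a).erase x₀).card := by
      rw [show {x : V // T.Adj a x ∧ (T.deleteEdges {s(a, x)}).Reachable a b}
          = ↥{x : V | T.Adj a x ∧ (T.deleteEdges {s(a, x)}).Reachable a b} from rfl,
        Nat.card_coe_set_eq, hset, Set.ncard_coe_finset]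
    rw [this, Finset.card_erase_of_mem (by rwa [mem_neighborFinset]),
      card_neighborFinset_eq_degree]


/-- The set of trees with degree sequence `δ`. -/
abbrev TreeSet [Fintype V] (δ : V → ℕ) : Type _ :=
  {G : SimpleGraph V // G.IsTree ∧ ∀ k, G.degree k = δ k}

/-- Pairs of a tree with degree sequence `δ` together with a marked neighbor `x` of `a`
such that `a` and `b` remain connected after deleting the edge `a-x`. -/
abbrev Pairs [Fintype V] (δ : V → ℕ) (a b : V) : Type _ :=
  {P : TreeSet δ × V //
    (P.1.1 : SimpleGraph V).Adj a P.2 ∧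
      ((P.1.1 : SimpleGraph V).deleteEdges {s(a, P.2)}).Reachable a b}

noncomputable def movePair [Fintype V] (δ δ' : V → ℕ) (a b : V) (hab : a ≠ b)
    (hA : δ' a = δ a - 1) (hB : δ' b = δ b + 1)
    (hK : ∀ k, k ≠ a → k ≠ b → δ' k = δ k) (P : Pairs δ a b) : Pairs δ' b a :=
  ⟨⟨⟨move P.1.1.1 a b P.1.2,
      ⟨move_connected P.1.1.2.1 hab P.2.1 P.2.2, move_acyclic P.1.1.2.1 hab P.2.1 P.2.2⟩,
      by
        intro k
        have hT := P.1.1.2.1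
        have hdeg := P.1.1.2.2
        have hadj := P.2.1
        have hre := P.2.2
        have hxa : P.1.2 ≠ a := hadj.ne'
        have hxb : P.1.2 ≠ b := x_ne_b hT hadj hre
        have hbx : ¬ (P.1.1.1 : SimpleGraph V).Adj b P.1.2 := not_adj_bx hT hab hadj hre
        rw [move_degree hab hxa hxb hadj hbx k]
        by_cases hka : k = a
        · subst hka; rw [if_pos rfl, hdeg, hA]
        · rw [if_neg hka]
          by_cases hkb : k = b
          · subst hkb; rw [if_pos rfl, hdeg, hB]
          · rw [if_neg hkb, hdeg, hK k hka hkb]⟩,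
    P.1.2⟩,
    move_adj_bx hab P.2.1.ne' (x_ne_b P.1.1.2.1 P.2.1 P.2.2),
    by
      rw [move_deleteEdges hab P.2.1.ne' (not_adj_bx P.1.1.2.1 hab P.2.1 P.2.2)]
      exact P.2.2.symm⟩

lemma count_pairs [Fintype V] (δ : V → ℕ) (a b : V) (hab : a ≠ b) :
    Nat.card (Pairs δ a b) = (δ a - 1) * Nat.card (TreeSet δ) := by
  have e : Pairs δ a b ≃ (T : TreeSet δ) × {x : V // (T.1 : SimpleGraph V).Adj a x ∧
      ((T.1 : SimpleGraph V).deleteEdges {s(a, x)}).Reachable a b} :=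
    { toFun := fun P => ⟨P.1.1, P.1.2, P.2⟩
      invFun := fun Q => ⟨(Q.1, Q.2.1), Q.2.2⟩
      left_inv := fun P => rfl
      right_inv := fun Q => rfl }
  have hfib : ∀ T : TreeSet δ, Fintype.card {x : V // (T.1 : SimpleGraph V).Adj a x ∧
      ((T.1 : SimpleGraph V).deleteEdges {s(a, x)}).Reachable a b} = δ a - 1 := fun T => by
    rw [← Nat.card_eq_fintype_card, fiber_card T.2.1 hab, T.2.2 a]
  rw [Nat.card_congr e, Nat.card_eq_fintype_card, Fintype.card_sigma]
  rw [Finset.sum_congr rfl (fun T _ => hfib T), Finset.sum_const, smul_eq_mul,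
    Finset.card_univ, mul_comm, Nat.card_eq_fintype_card]

lemma pairs_card_eq [Fintype V] (δ δ' : V → ℕ) (a b : V) (hab : a ≠ b)
    (hδa : 0 < δ a) (hA : δ' a = δ a - 1) (hB : δ' b = δ b + 1)
    (hK : ∀ k, k ≠ a → k ≠ b → δ' k = δ k) :
    Nat.card (Pairs δ a b) = Nat.card (Pairs δ' b a) := by
  have hA' : δ b = δ' b - 1 := by omega
  have hB' : δ a = δ' a + 1 := by omega
  refine Nat.card_congr ⟨movePair δ δ' a b hab hA hB hK,
    movePair δ' δ b a hab.symm hA' hB' (fun k hkb hka => (hK k hka hkb).symm), ?_, ?_⟩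
  · rintro ⟨⟨⟨T, hT, hdeg⟩, x⟩, hadj, hre⟩
    apply Subtype.ext
    apply Prod.ext
    · apply Subtype.ext
      show move (move T a b x) b a x = T
      exact move_move hab hadj.ne' hadj (not_adj_bx hT hab hadj hre)
    · rfl
  · rintro ⟨⟨⟨T, hT, hdeg⟩, y⟩, hadj, hre⟩
    apply Subtype.ext
    apply Prod.ext
    · apply Subtype.ext
      show move (move T b a y) a b y = T
      exact move_move hab.symm hadj.ne' hadj (not_adj_bx hT hab.symm hadj hre)
    · rfl

end CayleyMoveAux

/-- **Symmetry lemma for degree-constrained Cayley trees.**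
For a tuple `γ` of positive integers summing to `2n − 2`, moving one unit of degree
from vertex `i` to vertex `j` changes the number of Cayley trees with degree
sequence `γ` by the explicit factor: `(γ_i − 1)·|T_γ| = (γ'_j − 1)·|T_{γ'}|`. -/
theorem cayley_degree_symmetry (n : ℕ) (hn : 2 ≤ n)
    (γ : Fin n → ℕ) (hγpos : ∀ k, 0 < γ k) (hγsum : ∑ k, γ k = 2 * n - 2)
    (i j : Fin n) (hij : i ≠ j)
    (γ' : Fin n → ℕ)
    (hγ' : γ' = Function.update (Function.update γ i (γ i - 1)) j (γ j + 1)) :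
    (γ i - 1) *
        Nat.card {G : SimpleGraph (Fin n) // G.IsTree ∧ ∀ k, G.degree k = γ k}
      =
    (γ' j - 1) *
        Nat.card {G : SimpleGraph (Fin n) // G.IsTree ∧ ∀ k, G.degree k = γ' k} := by
  have hγ'i : γ' i = γ i - 1 := by
    rw [hγ', Function.update_of_ne hij, Function.update_self]
  have hγ'j : γ' j = γ j + 1 := by rw [hγ', Function.update_self]
  have hγ'k : ∀ k, k ≠ i → k ≠ j → γ' k = γ k := fun k hki hkj => by
    rw [hγ', Function.update_of_ne hkj, Function.update_of_ne hki]
  calc (γ i - 1) * Nat.card (CayleyMoveAux.TreeSet γ)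
      = Nat.card (CayleyMoveAux.Pairs γ i j) := (CayleyMoveAux.count_pairs γ i j hij).symm
    _ = Nat.card (CayleyMoveAux.Pairs γ' j i) :=
        CayleyMoveAux.pairs_card_eq γ γ' i j hij (hγpos i) hγ'i hγ'j hγ'k
    _ = (γ' j - 1) * Nat.card (CayleyMoveAux.TreeSet γ') :=
        CayleyMoveAux.count_pairs γ' j i hij.symm
end

section
/- Fix d ≥ 1, a tuple n = (n_1,…,n_d) of positive integers, and ρ ∈ {1,…,d}. In the polynomial ring ℤ[x_{s,t,i} : s,t ∈ [d], i ∈ [n_t]] the following identity holds: Σ_{T ∈ T_ρ(n)} ∏_{s,t∈[d], i∈[n_t]} x_{s,t,i}^{ch_s(t,i)} = ∏_{s∈[d]} ( Σ_{t∈[d], i∈[n_t]} x_{s,t,i} )^{n_s − 1} · Δ, where Δ = Σ_{A ∈ Cay_d^ρ} ∏_{(s,t)∈A} ( Σ_{i∈[n_t]} x_{s,t,i} ). -/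
open scoped Classical

/-- The vertex set of multitype Cayley trees of profile `n`: the vertex `⟨t, i⟩`
has type `t` and label `i`. -/
abbrev Vtx (d : ℕ) (n : Fin d → ℕ) := Σ t : Fin d, Fin (n t)

/-- A rooted multitype Cayley tree of profile `n`, encoded by the pair consisting of
its root vertex and its parent function (edges are oriented toward the root): the
root is a fixed point of the parent function and every vertex eventually reaches
the root by iterating it. -/
def MTree (d : ℕ) (n : Fin d → ℕ) : Type :=
  {p : Vtx d n × (Vtx d n → Vtx d n) //
    p.2 p.1 = p.1 ∧ ∀ v, ∃ k, p.2^[k] v = p.1}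

namespace MTree

variable {d : ℕ} {n : Fin d → ℕ}

/-- The root vertex of a rooted multitype Cayley tree. -/
def root (T : MTree d n) : Vtx d n := T.1.1

/-- The parent function of a rooted multitype Cayley tree. -/
def parent (T : MTree d n) : Vtx d n → Vtx d n := T.1.2

/-- `T.ch s w` is the number of children of type `s` of the vertex `w` in `T`. -/
noncomputable def ch (T : MTree d n) (s : Fin d) (w : Vtx d n) : ℕ :=
  Nat.card {v : Vtx d n // v.1 = s ∧ v ≠ T.root ∧ T.parent v = w}

/-- `T.etype s t` is the number of edges of type `(s,t)` of `T`, i.e. edges going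
from a vertex of type `s` to a vertex of type `t` (edges oriented toward the root). -/
noncomputable def etype (T : MTree d n) (s t : Fin d) : ℕ :=
  Nat.card {v : Vtx d n // v ≠ T.root ∧ v.1 = s ∧ (T.parent v).1 = t}

end MTree

/-- `Cay d ρ` is the set of (unitype) Cayley trees with vertex set `Fin d`, rooted at
`ρ` and oriented toward the root, encoded by parent functions: the oriented edges of
`A` are the pairs `(s, A.1 s)` for `s ≠ ρ`. -/
def Cay (d : ℕ) (ρ : Fin d) : Type :=
  {f : Fin d → Fin d // f ρ = ρ ∧ ∀ v, ∃ k, f^[k] v = ρ}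

noncomputable instance (d : ℕ) (n : Fin d → ℕ) : Fintype (MTree d n) :=
  Subtype.fintype _

noncomputable instance (d : ℕ) (ρ : Fin d) : Fintype (Cay d ρ) :=
  Subtype.fintype _

noncomputable section MTT
variable {F : Type} [Field F] {V : Type} [Fintype V] [DecidableEq V]

/-- extend a function on non-root vertices by fixing the root -/
def extFun (r : V) (g : {x : V // x ≠ r} → V) : V → V :=
  fun x => if h : x = r then r else g ⟨x, h⟩

lemma extFun_ne (r : V) (g : {x : V // x ≠ r} → V) (u : {x : V // x ≠ r}) :
    extFun r g u.1 = g u := dif_neg u.2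

lemma detE (r : V) (f : {x : V // x ≠ r} → V) :
    (Matrix.of fun u v : {x : V // x ≠ r} =>
      (if u = v then (1:F) else 0) - (if f u = v.1 then 1 else 0)).det
    = if (∀ v, ∃ k, (extFun r f)^[k] v = r) then 1 else 0 := by
  set fh := extFun r f with hfhdef
  have hfh_ne : ∀ u : {x : V // x ≠ r}, fh u.1 = f u := extFun_ne r f
  by_cases hac : ∀ v, ∃ k, fh^[k] v = r
  · rw [if_pos hac]
    set b : {x : V // x ≠ r} → ℕ := fun u => Nat.find (hac u.1) with hb
    have hb_spec : ∀ u, fh^[b u] u.1 = r := fun u => Nat.find_spec (hac u.1)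
    have hb0 : ∀ u, b u ≠ 0 := by
      intro u h
      have h2 := hb_spec u
      rw [h] at h2
      exact u.2 h2
    have hstep : ∀ (u : {x : V // x ≠ r}) (h : f u ≠ r), b ⟨f u, h⟩ < b u := by
      intro u h
      obtain ⟨m, hm⟩ := Nat.exists_eq_succ_of_ne_zero (hb0 u)
      have h1 : fh^[m] (f u) = r := by
        rw [← hfh_ne u, ← Function.iterate_succ_apply, ← hm]
        exact hb_spec u
      have : b ⟨f u, h⟩ ≤ m := Nat.find_le h1
      omega
    have hne : ∀ u : {x : V // x ≠ r}, f u ≠ u.1 := by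
      intro u h
      by_cases hr : f u = r
      · exact u.2 (h.symm.trans hr)
      · have h2 := hstep u hr
        have : (⟨f u, hr⟩ : {x : V // x ≠ r}) = u := Subtype.ext h
        rw [this] at h2
        exact lt_irrefl _ h2
    rw [← Matrix.det_transpose]
    have htri : (Matrix.of fun u v : {x : V // x ≠ r} =>
        (if u = v then (1:F) else 0) - (if f u = v.1 then 1 else 0)).transpose.BlockTriangular b := by
      intro i j hij
      have h1 : j ≠ i := fun h => by rw [h] at hij; exact lt_irrefl _ hij
      have h2 : f j ≠ i.1 := by
        intro h
        have hfr : f j ≠ r := h ▸ i.2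
        have h3 := hstep j hfr
        have : (⟨f j, hfr⟩ : {x : V // x ≠ r}) = i := Subtype.ext h
        rw [this] at h3
        omega
      simp [Matrix.transpose_apply, h1, h2]
    rw [htri.det]
    apply Finset.prod_eq_one
    intro a _
    have hblock : ((Matrix.of fun u v : {x : V // x ≠ r} =>
        (if u = v then (1:F) else 0) - (if f u = v.1 then 1 else 0)).transpose.toSquareBlock b a)
        = 1 := by
      ext i j
      by_cases hij : i = j
      · subst hij
        simp [Matrix.toSquareBlock_def, Matrix.one_apply_eq, hne i.1]
      · have h1 : j.1 ≠ i.1 := by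
          intro h
          exact hij (Subtype.ext h.symm)
        have h2 : f j.1 ≠ i.1.1 := by
          intro h
          have hfr : f j.1 ≠ r := h ▸ i.1.2
          have h3 := hstep j.1 hfr
          have he : (⟨f j.1, hfr⟩ : {x : V // x ≠ r}) = i.1 := Subtype.ext h
          rw [he] at h3
          rw [i.2, j.2] at h3
          exact lt_irrefl _ h3
        simp [Matrix.toSquareBlock_def, Matrix.one_apply_ne (Ne.symm hij), h1, h2,
          Matrix.one_apply_ne hij]
    rw [hblock, Matrix.det_one]
  · rw [if_neg hac]
    push_neg at hac
    obtain ⟨v₀, hv₀⟩ := hac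
    obtain ⟨a0, b0, hab, heq⟩ : ∃ a b : ℕ, a ≠ b ∧ fh^[a] v₀ = fh^[b] v₀ := by
      obtain ⟨a, b, h1, h2⟩ := Finite.exists_ne_map_eq_of_infinite (fun k : ℕ => fh^[k] v₀)
      exact ⟨a, b, h1, h2⟩
    suffices key : ∀ a b : ℕ, a < b → fh^[a] v₀ = fh^[b] v₀ →
        (Matrix.of fun u v : {x : V // x ≠ r} =>
          (if u = v then (1:F) else 0) - (if f u = v.1 then 1 else 0)).det = 0 by
      rcases hab.lt_or_gt with h | h
      · exact key a0 b0 h heq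
      · exact key b0 a0 h heq.symm
    intro a b hab heq
    obtain ⟨c, hc0, hcb⟩ : ∃ c, 0 < c ∧ c + a = b := ⟨b - a, by omega, by omega⟩
    set u₀ := fh^[a] v₀ with hu₀
    have horb : ∀ j, fh^[j] u₀ ≠ r := by
      intro j
      rw [hu₀, ← Function.iterate_add_apply]
      exact hv₀ _
    have hcyc : fh^[c] u₀ = u₀ := by
      rw [hu₀, ← Function.iterate_add_apply]
      rw [hcb, ← heq]
    set φ : ℕ → {x : V // x ≠ r} := fun j => ⟨fh^[j] u₀, horb j⟩ with hφ
    have hφc : φ c = φ 0 := by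
      apply Subtype.ext
      exact hcyc
    have hfφ : ∀ j, f (φ j) = (φ (j+1)).1 := by
      intro j
      rw [← hfh_ne (φ j)]
      simp [hφ, Function.iterate_succ_apply']
    set ψ : {x : V // x ≠ r} → {x : V // x ≠ r} := fun u =>
      if h : f u = r then u else ⟨f u, h⟩ with hψ
    have hψφ : ∀ j, ψ (φ j) = φ (j + 1) := by
      intro j
      have h1 : f (φ j) ≠ r := by rw [hfφ j]; exact (φ (j+1)).2
      simp only [hψ, dif_neg h1]
      exact Subtype.ext (hfφ j)
    set C : Finset {x : V // x ≠ r} := (Finset.range c).image φ with hC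
    have hCne : φ 0 ∈ C := Finset.mem_image.2 ⟨0, Finset.mem_range.2 hc0, rfl⟩
    have himg : C.image ψ = C := by
      apply Finset.Subset.antisymm
      · intro u hu
        obtain ⟨w, hw, rfl⟩ := Finset.mem_image.1 hu
        obtain ⟨j, hj, rfl⟩ := Finset.mem_image.1 hw
        rw [Finset.mem_range] at hj
        rw [hψφ j]
        rcases Nat.lt_or_ge (j+1) c with h | h
        · exact Finset.mem_image.2 ⟨j+1, Finset.mem_range.2 h, rfl⟩
        · have : j + 1 = c := by omega
          rw [this, hφc]
          exact hCne
      · intro u hu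
        obtain ⟨j, hj, rfl⟩ := Finset.mem_image.1 hu
        rw [Finset.mem_range] at hj
        rcases Nat.eq_zero_or_pos j with h | h
        · subst h
          refine Finset.mem_image.2 ⟨φ (c-1), ?_, ?_⟩
          · exact Finset.mem_image.2 ⟨c-1, Finset.mem_range.2 (by omega), rfl⟩
          · rw [hψφ (c-1)]
            have : c - 1 + 1 = c := by omega
            rw [this, hφc]
        · refine Finset.mem_image.2 ⟨φ (j-1), ?_, ?_⟩
          · exact Finset.mem_image.2 ⟨j-1, Finset.mem_range.2 (by omega), rfl⟩
          · rw [hψφ (j-1)]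
            congr 1
            omega
    have hinj : Set.InjOn ψ C := by
      apply Finset.injOn_of_card_image_eq
      rw [himg]
    have hfC : ∀ u ∈ C, f u ≠ r := by
      intro u hu
      obtain ⟨j, hj, rfl⟩ := Finset.mem_image.1 hu
      rw [hfφ j]
      exact (φ (j+1)).2
    have hψC : ∀ u ∈ C, (ψ u).1 = f u := by
      intro u hu
      simp only [hψ, dif_neg (hfC u hu)]
    -- the indicator vector of C is in the left kernel
    refine Matrix.exists_vecMul_eq_zero_iff.mp
      ⟨fun u => if u ∈ C then (1:F) else 0, ?_, ?_⟩
    · intro h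
      have := congrFun h (φ 0)
      simp [hCne] at this
    · ext v
      simp only [Matrix.vecMul, dotProduct, Pi.zero_apply]
      have : ∀ u : {x : V // x ≠ r},
          (if u ∈ C then (1:F) else 0) * (Matrix.of fun u v : {x : V // x ≠ r} =>
            (if u = v then (1:F) else 0) - (if f u = v.1 then 1 else 0)) u v
          = (if u ∈ C then ((if u = v then (1:F) else 0) - (if f u = v.1 then 1 else 0)) else 0) := by
        intro u
        by_cases h : u ∈ C <;> simp [h]
      rw [Finset.sum_congr rfl (fun u _ => this u), Finset.sum_ite_mem,
        Finset.univ_inter, Finset.sum_sub_distrib]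
      have h1 : ∑ u ∈ C, (if u = v then (1:F) else 0) = if v ∈ C then 1 else 0 :=
        Finset.sum_ite_eq' C v (fun _ => (1:F))
      have h2 : ∑ u ∈ C, (if f u = v.1 then (1:F) else 0) = if v ∈ C then 1 else 0 := by
        have hcong : ∀ u ∈ C, (if f u = v.1 then (1:F) else 0)
            = (fun w => if w = v then (1:F) else 0) (ψ u) := by
          intro u hu
          by_cases hh : f u = v.1
          · have he : ψ u = v := Subtype.ext (by rw [hψC u hu]; exact hh)
            simp [hh, he]
          · have he : ψ u ≠ v := fun e => hh (by rw [← hψC u hu, e])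
            simp [hh, he]
        rw [Finset.sum_congr rfl hcong,
          ← Finset.sum_image (g := ψ) (f := fun w => if w = v then (1:F) else 0)
            (fun x hx y hy h => hinj hx hy h), himg]
        exact Finset.sum_ite_eq' C v (fun _ => (1:F))
      rw [h1, h2, sub_self]

/-- The extension equivalence between pinned parent functions and functions on non-root
vertices whose extension is "acyclic toward `r`". -/
def pinEquiv (r : V) :
    {f : V → V // f r = r ∧ ∀ v, ∃ k, f^[k] v = r} ≃
    {g : {x : V // x ≠ r} → V // ∀ v, ∃ k, (extFun r g)^[k] v = r} where
  toFun f := ⟨fun u => f.1 u.1, by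
    have he : extFun r (fun u : {x : V // x ≠ r} => f.1 u.1) = f.1 := by
      funext x
      by_cases h : x = r
      · subst h; simp [extFun, f.2.1]
      · simp [extFun, h]
    rw [he]
    exact f.2.2⟩
  invFun g := ⟨extFun r g.1, dif_pos rfl, g.2⟩
  left_inv f := by
    apply Subtype.ext
    funext x
    by_cases h : x = r
    · subst h; simp [extFun, f.2.1]
    · simp [extFun, h]
  right_inv g := by
    apply Subtype.ext
    funext u
    exact dif_neg u.2

/-- Directed weighted matrix-tree theorem. -/
lemma mtt (r : V) (w : V → V → F) :
    ∑ g : {f : V → V // f r = r ∧ ∀ v, ∃ k, f^[k] v = r},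
        ∏ u : {x : V // x ≠ r}, w u.1 (g.1 u.1)
    = (Matrix.of fun u v : {x : V // x ≠ r} =>
        (if u = v then ∑ x : V, w u.1 x else 0) - w u.1 v.1).det := by
  have hrow : (Matrix.of fun u v : {x : V // x ≠ r} =>
      (if u = v then ∑ x : V, w u.1 x else 0) - w u.1 v.1)
      = Matrix.of (fun u : {x : V // x ≠ r} => ∑ x : V, w u.1 x •
          (fun v : {x : V // x ≠ r} =>
            ((if u = v then (1:F) else 0) - (if x = v.1 then 1 else 0)))) := by
    ext u v
    simp only [Matrix.of_apply, Finset.sum_apply, Pi.smul_apply, smul_eq_mul, mul_sub]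
    rw [Finset.sum_sub_distrib]
    congr 1
    · by_cases h : u = v <;> simp [h]
    · simp [mul_ite]
  rw [hrow]
  have hdet : (Matrix.of (fun u : {x : V // x ≠ r} => ∑ x : V, w u.1 x •
          (fun v : {x : V // x ≠ r} =>
            ((if u = v then (1:F) else 0) - (if x = v.1 then 1 else 0))))).det
      = ∑ p : {x : V // x ≠ r} → V, (∏ u, w u.1 (p u)) •
          (Matrix.of fun u v : {x : V // x ≠ r} =>
            ((if u = v then (1:F) else 0) - (if p u = v.1 then 1 else 0))).det := by
    have h0 : ∀ m : ({x : V // x ≠ r}) → ({x : V // x ≠ r}) → F, (Matrix.of m).det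
        = Matrix.detRowAlternating.toMultilinearMap m := fun _ => rfl
    rw [h0]
    rw [MultilinearMap.map_sum]
    apply Finset.sum_congr rfl
    intro p _
    rw [MultilinearMap.map_smul_univ]
    rfl
  rw [hdet]
  have hind : ∀ p : {x : V // x ≠ r} → V,
      (∏ u, w u.1 (p u)) • (Matrix.of fun u v : {x : V // x ≠ r} =>
          ((if u = v then (1:F) else 0) - (if p u = v.1 then 1 else 0))).det
      = if (∀ v, ∃ k, (extFun r p)^[k] v = r) then ∏ u, w u.1 (p u) else 0 := by
    intro p
    rw [detE]
    by_cases h : ∀ v, ∃ k, (extFun r p)^[k] v = r <;> simp [h]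
  rw [Finset.sum_congr rfl (fun p _ => hind p), Finset.sum_ite, Finset.sum_const_zero, add_zero]
  rw [Finset.sum_subtype (Finset.univ.filter
      (fun p : {x : V // x ≠ r} → V => ∀ v, ∃ k, (extFun r p)^[k] v = r))
      (p := fun p => ∀ v, ∃ k, (extFun r p)^[k] v = r) (by simp)
      (fun p => ∏ u, w u.1 (p u))]
  exact Fintype.sum_equiv (pinEquiv r) _ _ (fun f => rfl)

end MTT

section Apply
variable {F : Type} [Field F]

abbrev Vtx' (d : ℕ) (n : Fin d → ℕ) := Σ t : Fin d, Fin (n t)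

lemma zsum {d : ℕ} {n : Fin d → ℕ} (y : Fin d → Vtx' d n → F) (s t : Fin d) :
    (∑ v : Vtx' d n, if v.1 = t then y s v else 0) = ∑ i : Fin (n t), y s ⟨t, i⟩ := by
  rw [← Finset.univ_sigma_univ, Finset.sum_sigma]
  have h1 : ∀ t' : Fin d, (∑ i : Fin (n t'), if t' = t then y s ⟨t', i⟩ else 0)
      = if t' = t then (∑ i : Fin (n t'), y s ⟨t', i⟩) else 0 := by
    intro t'
    by_cases h : t' = t <;> simp [h]
  rw [Finset.sum_congr rfl (fun t' _ => h1 t')]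
  rw [Finset.sum_ite_eq' Finset.univ t (fun t' => ∑ i : Fin (n t'), y s ⟨t', i⟩)]
  simp

lemma sumzR {d : ℕ} {n : Fin d → ℕ} (y : Fin d → Vtx' d n → F) (s : Fin d) :
    ∑ t : Fin d, ∑ i : Fin (n t), y s ⟨t, i⟩ = ∑ v : Vtx' d n, y s v := by
  rw [← Finset.univ_sigma_univ, Finset.sum_sigma]

lemma prodR {d : ℕ} {n : Fin d → ℕ} (g : Fin d → F) :
    ∏ u : Vtx' d n, g u.1 = ∏ s : Fin d, (g s) ^ (n s) := by
  rw [← Finset.univ_sigma_univ, Finset.prod_sigma]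
  simp

lemma det_updateColumn_sum' {m : Type} [Fintype m] [DecidableEq m] {ι : Type*}
    (M : Matrix m m F) (j : m) (s : Finset ι) (c : ι → m → F) :
    (M.updateCol j (fun i => ∑ a ∈ s, c a i)).det
    = ∑ a ∈ s, (M.updateCol j (c a)).det := by
  induction s using Finset.induction_on with
  | empty =>
    simp only [Finset.sum_empty]
    apply Matrix.det_eq_zero_of_column_eq_zero j
    intro i
    simp [Matrix.updateCol_self]
  | @insert a s ha ih =>
    rw [Finset.sum_insert ha]
    have : (fun i => ∑ b ∈ insert a s, c b i)
        = (fun i => c a i) + (fun i => ∑ b ∈ s, c b i) := by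
      funext i
      simp [Finset.sum_insert ha]
    rw [this, Matrix.det_updateCol_add, ih]

lemma det_updateColumn_single {m : Type} [Fintype m] [DecidableEq m]
    (M : Matrix m m F) (ρ : m) (cval : F) :
    (M.updateCol ρ (fun s => if s = ρ then cval else 0)).det
    = cval * (Matrix.of fun s t : {x : m // x ≠ ρ} => M s.1 t.1).det := by
  haveI : Unique {x : m // x = ρ} := ⟨⟨⟨ρ, rfl⟩⟩, fun x => Subtype.ext x.2⟩
  rw [← Matrix.det_submatrix_equiv_self (Equiv.sumCompl (· = ρ))]
  have hsub : ((M.updateCol ρ (fun s => if s = ρ then cval else 0)).submatrix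
      (Equiv.sumCompl (· = ρ)) (Equiv.sumCompl (· = ρ)))
      = Matrix.fromBlocks
        (Matrix.of fun _ _ : {x : m // x = ρ} => cval)
        (Matrix.of fun (_ : {x : m // x = ρ}) (t : {x : m // ¬ x = ρ}) => M ρ t.1)
        0
        (Matrix.of fun s t : {x : m // ¬ x = ρ} => M s.1 t.1) := by
    ext i j
    cases i with
    | inl a =>
      cases j with
      | inl b =>
        simp [Matrix.submatrix_apply, Equiv.sumCompl_apply_inl,
          Matrix.updateCol_apply, b.2, a.2]
      | inr b =>
        simp [Matrix.submatrix_apply, Equiv.sumCompl_apply_inl,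
          Equiv.sumCompl_apply_inr, Matrix.updateCol_apply, b.2, a.2]
    | inr a =>
      cases j with
      | inl b =>
        simp [Matrix.submatrix_apply, Equiv.sumCompl_apply_inl,
          Equiv.sumCompl_apply_inr, Matrix.updateCol_apply, b.2, a.2]
      | inr b =>
        simp [Matrix.submatrix_apply, Equiv.sumCompl_apply_inr,
          Matrix.updateCol_apply, b.2]
  rw [hsub, Matrix.det_fromBlocks_zero₂₁, Matrix.det_unique]
  rfl

end Apply

section DetL
variable {F : Type} [Field F]

set_option maxHeartbeats 2000000 in
lemma detL_eq {d : ℕ} {n : Fin d → ℕ} (y : Fin d → Vtx' d n → F)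
    (hR : ∀ s, (∑ v, y s v) ≠ 0) (ρ : Fin d) (r : Vtx' d n) (hr : r.1 = ρ) :
    (Matrix.of fun u v : {x : Vtx' d n // x ≠ r} =>
      (if u = v then ∑ x, y u.1.1 x else 0) - y u.1.1 v.1).det
    = (∏ s, (∑ v, y s v) ^ (n s)) * (∑ v, y ρ v)⁻¹ * ((∏ t, (∑ v, y t v)⁻¹) *
       (Matrix.of fun s t : Fin d =>
         (if s = t then (∑ v, y t v) else 0) - (∑ i : Fin (n t), y s ⟨t, i⟩)
         + (if t = ρ then y s r else 0)).det) := by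
  set R : Fin d → F := fun s => ∑ v, y s v with hRdef
  set z : Fin d → Fin d → F := fun s t => ∑ i : Fin (n t), y s ⟨t, i⟩ with hzdef
  set D : Matrix {x : Vtx' d n // x ≠ r} {x : Vtx' d n // x ≠ r} F :=
    Matrix.diagonal (fun u => R u.1.1) with hD
  set Di : Matrix {x : Vtx' d n // x ≠ r} {x : Vtx' d n // x ≠ r} F :=
    Matrix.diagonal (fun u => (R u.1.1)⁻¹) with hDi
  set P : Matrix {x : Vtx' d n // x ≠ r} (Fin d) F :=
    Matrix.of (fun u s => if u.1.1 = s then (1:F) else 0) with hP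
  set Q : Matrix (Fin d) {x : Vtx' d n // x ≠ r} F :=
    Matrix.of (fun s v => y s v.1) with hQ
  set Kmat : Matrix (Fin d) (Fin d) F := Matrix.of (fun s t =>
    (if s = t then R t else 0) - z s t + (if t = ρ then y s r else 0)) with hK
  have hPQ : ∀ (u v : {x : Vtx' d n // x ≠ r}), (P * Q) u v = y u.1.1 v.1 := by
    intro u v
    simp [hP, hQ, Matrix.mul_apply, ite_mul, Finset.sum_ite_eq]
  have step1 : (Matrix.of fun u v : {x : Vtx' d n // x ≠ r} =>
      (if u = v then ∑ x, y u.1.1 x else 0) - y u.1.1 v.1)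
      = D * (1 - Di * (P * Q)) := by
    ext u v
    rw [hD, Matrix.diagonal_mul]
    simp only [Matrix.sub_apply, Matrix.one_apply, Matrix.of_apply]
    rw [hDi, Matrix.diagonal_mul, hPQ u v]
    rw [mul_sub]
    congr 1
    · by_cases h : u = v <;> simp [h, hRdef]
    · rw [← mul_assoc, mul_inv_cancel₀ (hR u.1.1), one_mul]
  have step3 : (1 - Di * (P * Q)).det = (1 - Q * (Di * P)).det := by
    have h1 : Di * (P * Q) = (Di * P) * Q := by rw [Matrix.mul_assoc]
    have h2 : (1 : Matrix {x : Vtx' d n // x ≠ r} {x : Vtx' d n // x ≠ r} F)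
        - (Di * P) * Q = 1 + (-(Di * P)) * Q := by
      rw [Matrix.neg_mul, sub_eq_add_neg]
    have h3 : (1 : Matrix (Fin d) (Fin d) F) + Q * (-(Di * P)) = 1 - Q * (Di * P) := by
      rw [Matrix.mul_neg, sub_eq_add_neg]
    rw [h1, h2, Matrix.det_one_add_mul_comm, h3]
  have hQDiP : ∀ s t, (Q * (Di * P)) s t
      = (z s t - (if t = ρ then y s r else 0)) * (R t)⁻¹ := by
    intro s t
    have hDiP : ∀ (v : {x : Vtx' d n // x ≠ r}) (t : Fin d),
        (Di * P) v t = (R v.1.1)⁻¹ * (if v.1.1 = t then (1:F) else 0) := by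
      intro v t
      rw [hDi, Matrix.diagonal_mul]
      simp [hP]
    rw [Matrix.mul_apply]
    have hterm : ∀ v : {x : Vtx' d n // x ≠ r},
        Q s v * (Di * P) v t = (if v.1.1 = t then y s v.1 else 0) * (R t)⁻¹ := by
      intro v
      rw [hDiP v t, hQ]
      by_cases h : v.1.1 = t
      · simp [h, mul_comm]
      · simp [h]
    rw [Finset.sum_congr rfl (fun v _ => hterm v), ← Finset.sum_mul]
    congr 1
    -- ∑ v : {x // x ≠ r}, ite (v.1.1 = t) (y s v.1) 0 = z s t - ite (t = ρ) (y s r) 0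
    have hsub : ∑ v : {x : Vtx' d n // x ≠ r}, (if v.1.1 = t then y s v.1 else 0)
        = ∑ v ∈ Finset.univ.erase r, (if v.1 = t then y s v else 0) := by
      rw [Finset.sum_subtype (Finset.univ.erase r)
        (p := fun x => x ≠ r) (by simp) (fun v => if v.1 = t then y s v else 0)]
    rw [hsub, Finset.sum_erase_eq_sub (Finset.mem_univ r), zsum y s t]
    have hite : (if r.1 = t then y s r else 0) = (if t = ρ then y s r else 0) := by
      rw [hr]
      by_cases h : t = ρ
      · rw [if_pos h, if_pos h.symm]
      · rw [if_neg h, if_neg (fun hh => h hh.symm)]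
    rw [hite]
  have step6 : (1 : Matrix (Fin d) (Fin d) F) - Q * (Di * P)
      = Kmat * Matrix.diagonal (fun t => (R t)⁻¹) := by
    ext s t
    rw [Matrix.sub_apply, Matrix.one_apply, hQDiP s t, Matrix.mul_diagonal, hK]
    simp only [Matrix.of_apply]
    by_cases h : s = t
    · subst h
      rw [if_pos rfl, if_pos rfl]
      have hRs : R s ≠ 0 := hR s
      field_simp
      ring
    · rw [if_neg h, if_neg h]
      ring
  have detD : D.det = (∏ s, R s ^ (n s)) * (R ρ)⁻¹ := by
    rw [hD, Matrix.det_diagonal]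
    have h1 : ∏ u : {x : Vtx' d n // x ≠ r}, R u.1.1
        = ∏ u ∈ Finset.univ.erase r, R u.1 := by
      rw [Finset.prod_subtype (Finset.univ.erase r)
        (p := fun x => x ≠ r) (by simp) (fun u => R u.1)]
    have h2 : (∏ u ∈ Finset.univ.erase r, R u.1) * R r.1 = ∏ u : Vtx' d n, R u.1 :=
      Finset.prod_erase_mul Finset.univ (fun u => R u.1) (Finset.mem_univ r)
    have h3 : ∏ u : Vtx' d n, R u.1 = ∏ s, R s ^ (n s) := prodR R
    rw [h1]
    have hrρ : R r.1 = R ρ := by rw [hr]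
    have h4 : (∏ u ∈ Finset.univ.erase r, R u.1) = (∏ u : Vtx' d n, R u.1) * (R ρ)⁻¹ := by
      rw [← h2, hrρ, mul_assoc, mul_inv_cancel₀ (hR ρ), mul_one]
    rw [h4, h3]
  calc (Matrix.of fun u v : {x : Vtx' d n // x ≠ r} =>
      (if u = v then ∑ x, y u.1.1 x else 0) - y u.1.1 v.1).det
      = (D * (1 - Di * (P * Q))).det := by rw [step1]
    _ = D.det * (1 - Di * (P * Q)).det := Matrix.det_mul _ _
    _ = D.det * (1 - Q * (Di * P)).det := by rw [step3]
    _ = D.det * (Kmat * Matrix.diagonal (fun t => (R t)⁻¹)).det := by rw [step6]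
    _ = D.det * (Kmat.det * ∏ t, (R t)⁻¹) := by
        rw [Matrix.det_mul, Matrix.det_diagonal, Matrix.det_diagonal]
    _ = (∏ s, R s ^ (n s)) * (R ρ)⁻¹ * ((∏ t, (R t)⁻¹) * Kmat.det) := by
        rw [detD]; ring
end DetL



section TreeW
variable {F : Type} [Field F] {d : ℕ} {n : Fin d → ℕ}

lemma treeWeight (T : MTree d n) (y : Fin d → Vtx d n → F) :
    (∏ s : Fin d, ∏ v : Vtx d n, (y s v) ^ T.ch s v)
    = ∏ u ∈ Finset.univ.filter (fun u => u ≠ T.root), y u.1 (T.parent u) := by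
  rw [← Fintype.prod_prod_type (fun p : Fin d × Vtx d n => (y p.1 p.2) ^ T.ch p.1 p.2)]
  rw [Finset.prod_comp (fun p : Fin d × Vtx d n => y p.1 p.2)
    (fun u : Vtx d n => (u.1, T.parent u))]
  rw [← Finset.prod_subset (Finset.subset_univ
    ((Finset.univ.filter (fun u => u ≠ T.root)).image (fun u : Vtx d n => (u.1, T.parent u))))]
  · apply Finset.prod_congr rfl
    intro p _
    obtain ⟨ps, pv⟩ := p
    congr 1
    rw [MTree.ch, Nat.card_eq_fintype_card, Fintype.card_subtype]
    congr 1
    ext u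
    simp only [Finset.mem_filter, Finset.mem_univ, true_and, Prod.mk.injEq]
    tauto
  · intro p _ hp
    have hch : T.ch p.1 p.2 = 0 := by
      rw [MTree.ch, Nat.card_eq_fintype_card, Fintype.card_eq_zero_iff]
      refine ⟨fun v => ?_⟩
      obtain ⟨v, h1, h2, h3⟩ := v
      exact hp (Finset.mem_image.2 ⟨v, Finset.mem_filter.2 ⟨Finset.mem_univ v, h2⟩,
        by rw [h1, h3]⟩)
    rw [hch, pow_zero]

def rootEquiv (d : ℕ) (n : Fin d → ℕ) (ρ : Fin d) : {T : MTree d n // T.root.1 = ρ} ≃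
    Σ r : {v : Vtx d n // v.1 = ρ},
      {f : Vtx d n → Vtx d n // f r.1 = r.1 ∧ ∀ v, ∃ k, f^[k] v = r.1} where
  toFun T := ⟨⟨T.1.root, T.2⟩, ⟨T.1.parent, T.1.2.1, T.1.2.2⟩⟩
  invFun p := ⟨⟨(p.1.1, p.2.1), p.2.2.1, p.2.2.2⟩, p.1.2⟩
  left_inv T := rfl
  right_inv p := rfl

end TreeW

section Key
variable {F : Type} [Field F]

set_option maxHeartbeats 2000000 in
lemma key {d : ℕ} (n : Fin d → ℕ) (hn : ∀ t, 0 < n t) (ρ : Fin d)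
    (y : Fin d → Vtx d n → F) (hR : ∀ s, (∑ v, y s v) ≠ 0) :
    ∑ T : {T : MTree d n // T.root.1 = ρ},
        ∏ s : Fin d, ∏ v : Vtx d n, (y s v) ^ T.1.ch s v
    = (∏ s, (∑ v, y s v) ^ (n s - 1)) *
      ∑ A : Cay d ρ, ∏ s ∈ Finset.univ.erase ρ,
        ∑ i : Fin (n (A.1 s)), y s ⟨A.1 s, i⟩ := by
  classical
  set R : Fin d → F := fun s => ∑ v, y s v with hRdef
  set z : Fin d → Fin d → F := fun s t => ∑ i : Fin (n t), y s ⟨t, i⟩ with hzdef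
  set K0 : Matrix (Fin d) (Fin d) F :=
    Matrix.of (fun s t => (if s = t then R t else 0) - z s t) with hK0
  have hzR : ∀ s, ∑ t, z s t = R s := by
    intro s
    simp only [hzdef, hRdef]
    exact sumzR y s
  -- Step 1: tree sum = Σ_r Σ_f (product over non-root vertices)
  have h1 : ∑ T : {T : MTree d n // T.root.1 = ρ},
      ∏ s : Fin d, ∏ v : Vtx d n, (y s v) ^ T.1.ch s v
      = ∑ r : {v : Vtx d n // v.1 = ρ},
          ∑ f : {f : Vtx d n → Vtx d n // f r.1 = r.1 ∧ ∀ v, ∃ k, f^[k] v = r.1},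
            ∏ u : {x : Vtx d n // x ≠ r.1}, y u.1.1 (f.1 u.1) := by
    rw [Fintype.sum_equiv (rootEquiv d n ρ)
      (fun T => ∏ s : Fin d, ∏ v : Vtx d n, (y s v) ^ T.1.ch s v)
      (fun p => ∏ u ∈ Finset.univ.filter (fun u => u ≠ p.1.1), y u.1 (p.2.1 u))
      (fun T => treeWeight T.1 y)]
    rw [← Finset.univ_sigma_univ, Finset.sum_sigma]
    apply Finset.sum_congr rfl
    intro r _
    apply Finset.sum_congr rfl
    intro f _
    rw [Finset.prod_subtype (Finset.univ.filter (fun u => u ≠ r.1))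
      (p := fun x => x ≠ r.1) (by simp) (fun u => y u.1 (f.1 u))]
  rw [h1]
  -- Step 2: matrix-tree + determinant computation per root
  have h2 : ∀ r : {v : Vtx d n // v.1 = ρ},
      ∑ f : {f : Vtx d n → Vtx d n // f r.1 = r.1 ∧ ∀ v, ∃ k, f^[k] v = r.1},
        ∏ u : {x : Vtx d n // x ≠ r.1}, y u.1.1 (f.1 u.1)
      = (∏ s, R s ^ (n s)) * (R ρ)⁻¹ * ((∏ t, (R t)⁻¹) *
        (Matrix.of fun s t : Fin d =>
          (if s = t then R t else 0) - z s t + (if t = ρ then y s r.1 else 0)).det) := by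
    intro r
    rw [mtt r.1 (fun u x => y u.1 x)]
    exact detL_eq y hR ρ r.1 r.2
  rw [Finset.sum_congr rfl (fun r _ => h2 r), ← Finset.mul_sum, ← Finset.mul_sum]
  -- Step 3: sum of dets over roots
  have hsum0 : ∀ s, ∑ t, K0 s t = 0 := by
    intro s
    simp only [hK0, Matrix.of_apply]
    rw [Finset.sum_sub_distrib, hzR s, Finset.sum_ite_eq Finset.univ s R]
    simp
  have hdetK0 : K0.det = 0 := by
    apply Matrix.exists_mulVec_eq_zero_iff.mp
    refine ⟨fun _ => 1, ?_, ?_⟩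
    · intro hcon
      have := congrFun hcon ρ
      simp at this
    · ext s
      simp [Matrix.mulVec, dotProduct, hsum0 s]
  have h3 : ∑ r : {v : Vtx d n // v.1 = ρ},
      (Matrix.of fun s t : Fin d =>
        (if s = t then R t else 0) - z s t + (if t = ρ then y s r.1 else 0)).det
      = R ρ * (Matrix.of fun s t : {x : Fin d // x ≠ ρ} => K0 s.1 t.1).det := by
    have h4 : ∀ r : {v : Vtx d n // v.1 = ρ},
        (Matrix.of fun s t : Fin d =>
          (if s = t then R t else 0) - z s t + (if t = ρ then y s r.1 else 0)).det
        = (K0.updateCol ρ (fun s => y s r.1)).det := by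
      intro r
      have hupd : (Matrix.of fun s t : Fin d =>
          (if s = t then R t else 0) - z s t + (if t = ρ then y s r.1 else 0))
          = K0.updateCol ρ ((fun s => K0 s ρ) + (fun s => y s r.1)) := by
        ext s t
        rw [Matrix.updateCol_apply]
        by_cases h : t = ρ
        · subst h; simp [hK0]
        · simp [h, hK0]
      rw [hupd, Matrix.det_updateCol_add, Matrix.updateCol_eq_self, hdetK0, zero_add]
    rw [Finset.sum_congr rfl (fun r _ => h4 r)]
    rw [← det_updateColumn_sum' K0 ρ Finset.univ
      (fun (r : {v : Vtx d n // v.1 = ρ}) s => y s r.1)]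
    have hcolz : (fun s => ∑ r : {v : Vtx d n // v.1 = ρ}, y s r.1) = fun s => z s ρ := by
      funext s
      rw [← Finset.sum_subtype (Finset.univ.filter (fun v : Vtx d n => v.1 = ρ)) (by simp)
        (fun v => y s v)]
      rw [Finset.sum_filter]
      simp only [hzdef]
      exact zsum y s ρ
    rw [hcolz]
    have hzcol : (fun s => z s ρ) = (fun s => if s = ρ then R ρ else 0)
        + (fun s => ∑ t ∈ Finset.univ.erase ρ, K0 s t) := by
      funext s
      have h5 : ∑ t ∈ Finset.univ.erase ρ, K0 s t = - K0 s ρ := by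
        rw [Finset.sum_erase_eq_sub (Finset.mem_univ ρ), hsum0 s, zero_sub]
      simp only [Pi.add_apply]
      rw [h5]
      simp only [hK0, Matrix.of_apply]
      ring
    rw [hzcol, Matrix.det_updateCol_add,
      det_updateColumn_sum' K0 ρ (Finset.univ.erase ρ) (fun t s => K0 s t)]
    have h6 : ∀ t ∈ Finset.univ.erase ρ, (K0.updateCol ρ (fun s => K0 s t)).det = 0 := by
      intro t ht
      exact Matrix.det_updateCol_eq_zero (Finset.mem_erase.1 ht).1
    rw [Finset.sum_congr rfl h6, Finset.sum_const_zero, add_zero]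
    rw [det_updateColumn_single K0 ρ (R ρ)]
  rw [h3]
  -- Step 4: the minor is the type-level tree matrix
  have h7 : (Matrix.of fun s t : {x : Fin d // x ≠ ρ} => K0 s.1 t.1)
      = (Matrix.of fun s t : {x : Fin d // x ≠ ρ} =>
          (if s = t then ∑ x, z s.1 x else 0) - z s.1 t.1) := by
    ext s t
    simp only [Matrix.of_apply, hK0]
    congr 1
    by_cases h : s = t
    · subst h
      rw [if_pos rfl, if_pos rfl, hzR s.1]
    · have hst : s.1 ≠ t.1 := fun hh => h (Subtype.ext hh)
      rw [if_neg hst, if_neg h]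
  have h8 : (Matrix.of fun s t : {x : Fin d // x ≠ ρ} =>
        (if s = t then ∑ x, z s.1 x else 0) - z s.1 t.1).det
      = ∑ A : Cay d ρ, ∏ s ∈ Finset.univ.erase ρ, z s (A.1 s) := by
    rw [← mtt ρ z]
    refine Finset.sum_bij' (fun g _ => (⟨g.1, g.2⟩ : Cay d ρ))
      (fun A _ => ⟨A.1, A.2⟩) ?_ ?_ ?_ ?_ ?_
    · intros; exact Finset.mem_univ _
    · intros; simp
    · intros; rfl
    · intros; rfl
    · intro g _
      exact (Finset.prod_subtype (Finset.univ.erase ρ)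
        (p := fun x => x ≠ ρ) (by simp) (fun s => z s (g.1 s))).symm
  rw [h7, h8]
  -- Step 5: arithmetic
  have h10 : (∏ s, R s ^ (n s)) * (∏ t, (R t)⁻¹) = ∏ s, R s ^ (n s - 1) := by
    rw [← Finset.prod_mul_distrib]
    apply Finset.prod_congr rfl
    intro s _
    have hns : n s = (n s - 1) + 1 := by have := hn s; omega
    have hpow : R s ^ (n s) = R s ^ (n s - 1) * R s := by
      conv_lhs => rw [hns, pow_succ]
    rw [hpow, mul_assoc, mul_inv_cancel₀ (hR s), mul_one]
  have h11 : (R ρ)⁻¹ * R ρ = 1 := inv_mul_cancel₀ (hR ρ)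
  calc (∏ s, R s ^ (n s)) * (R ρ)⁻¹ * ((∏ t, (R t)⁻¹) * (R ρ *
        ∑ A : Cay d ρ, ∏ s ∈ Finset.univ.erase ρ, z s (A.1 s)))
      = ((∏ s, R s ^ (n s)) * (∏ t, (R t)⁻¹)) * (((R ρ)⁻¹ * R ρ) *
        ∑ A : Cay d ρ, ∏ s ∈ Finset.univ.erase ρ, z s (A.1 s)) := by ring
    _ = (∏ s, R s ^ (n s - 1)) * ((1:F) *
        ∑ A : Cay d ρ, ∏ s ∈ Finset.univ.erase ρ, z s (A.1 s)) := by rw [h10, h11]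
    _ = (∏ s, R s ^ (n s - 1)) *
        ∑ A : Cay d ρ, ∏ s ∈ Finset.univ.erase ρ, z s (A.1 s) := by rw [one_mul]

end Key


/-- **Generating function of multitype Cayley trees (Theorem 2).**
The generating polynomial of rooted multitype Cayley trees of profile `n` with root
vertex of type `ρ`, counted according to their indegree vectors, is
`∏_s (Σ_{t,i} x_{s,t,i})^{n_s−1} · Δ` where
`Δ = Σ_{A ∈ Cay_d^ρ} ∏_{(s,t)∈A} (Σ_i x_{s,t,i})`. -/
theorem multitype_cayley_generating_function (d : ℕ) (n : Fin d → ℕ)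
    (hn : ∀ t, 0 < n t) (ρ : Fin d) :
    ∑ T : {T : MTree d n // T.root.1 = ρ},
        ∏ s : Fin d, ∏ v : Vtx d n,
          (MvPolynomial.X (s, v) : MvPolynomial (Fin d × Vtx d n) ℤ) ^ T.1.ch s v
      =
    (∏ s : Fin d,
        (∑ v : Vtx d n,
          (MvPolynomial.X (s, v) : MvPolynomial (Fin d × Vtx d n) ℤ)) ^ (n s - 1)) *
      ∑ A : Cay d ρ, ∏ s ∈ Finset.univ.erase ρ,
        ∑ i : Fin (n (A.1 s)),
          (MvPolynomial.X (s, ⟨A.1 s, i⟩) : MvPolynomial (Fin d × Vtx d n) ℤ) := by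
  classical
  have hinj := IsFractionRing.injective (MvPolynomial (Fin d × Vtx d n) ℤ)
    (FractionRing (MvPolynomial (Fin d × Vtx d n) ℤ))
  apply hinj
  set φ := algebraMap (MvPolynomial (Fin d × Vtx d n) ℤ)
    (FractionRing (MvPolynomial (Fin d × Vtx d n) ℤ)) with hφ
  simp only [map_sum, map_prod, map_pow, _root_.map_mul]
  have hR : ∀ s : Fin d, (∑ v : Vtx d n, φ (MvPolynomial.X (s, v))) ≠ 0 := by
    intro s hzero
    have h1 : φ (∑ v : Vtx d n, MvPolynomial.X (s, v)) = 0 := by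
      rw [map_sum]; exact hzero
    have h2 : (∑ v : Vtx d n,
        (MvPolynomial.X (s, v) : MvPolynomial (Fin d × Vtx d n) ℤ)) = 0 := by
      apply hinj; rw [h1, map_zero]
    have h3 := congrArg (MvPolynomial.eval (fun _ => (1:ℤ))) h2
    rw [map_sum] at h3
    simp only [MvPolynomial.eval_X, map_zero, Finset.sum_const, Finset.card_univ,
      smul_eq_mul, mul_one] at h3
    have h4 : 0 < Fintype.card (Vtx d n) := by
      have : Nonempty (Vtx d n) := ⟨⟨ρ, ⟨0, hn ρ⟩⟩⟩
      exact Fintype.card_pos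
    exact absurd h3 (by positivity)
  exact key n hn ρ (fun s v => φ (MvPolynomial.X (s, v))) hR
end

section
/- Fix d ≥ 1, a tuple n = (n_1,…,n_d) of positive integers, and ρ ∈ [d]. Let γ = (γ_{s,t,i})_{s,t∈[d], i∈[n_t]} be a tuple of nonnegative integers, let s,t ∈ [d] and i ≠ j in [n_t], and let γ' be defined by γ'_{s,t,i} = γ_{s,t,i} − 1, γ'_{s,t,j} = γ_{s,t,j} + 1, and γ'_{a,b,c} = γ_{a,b,c} for (a,b,c) ∉ {(s,t,i),(s,t,j)} (assuming γ_{s,t,i} ≥ 1). Then γ_{s,t,i}·|T_{ρ,γ}| = γ'_{s,t,j}·|T_{ρ,γ'}|. -/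
open scoped Classical
open Function

namespace CayMove

set_option linter.unusedSectionVars false

variable {α : Type*} [DecidableEq α]

/-- tree predicate -/
def IsT (p : α → α) (r : α) : Prop := p r = r ∧ ∀ x, ∃ k, p^[k] x = r

/-- reachability -/
def Rch (p : α → α) (x y : α) : Prop := ∃ k, p^[k] x = y

theorem Rch.refl (p : α → α) (x : α) : Rch p x x := ⟨0, rfl⟩

theorem Rch.trans {p : α → α} {x y z : α} (h1 : Rch p x y) (h2 : Rch p y z) :
    Rch p x z := by
  obtain ⟨k, hk⟩ := h1; obtain ⟨l, hl⟩ := h2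
  exact ⟨l + k, by rw [iterate_add_apply, hk, hl]⟩

theorem Rch.single {p : α → α} {x y : α} (h : p x = y) : Rch p x y :=
  ⟨1, by simpa using h⟩

theorem IsT.iter_root {p : α → α} {r : α} (h : IsT p r) (k : ℕ) : p^[k] r = r :=
  iterate_fixed h.1 k

theorem IsT.eq_root_of_cycle {p : α → α} {r : α} (h : IsT p r) {x : α} {m : ℕ}
    (hm : 0 < m) (hx : p^[m] x = x) : x = r := by
  obtain ⟨k, hk⟩ := h.2 x
  have hmul : ∀ j : ℕ, p^[m * j] x = x := by
    intro j
    induction j with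
    | zero => simp
    | succ j ih => rw [Nat.mul_succ, iterate_add_apply, hx, ih]
  have h2 : k ≤ m * k := Nat.le_mul_of_pos_left k hm
  have h3 : p^[m * k] x = r := by
    rw [← Nat.sub_add_cancel h2, iterate_add_apply, hk, h.iter_root]
  rw [hmul k] at h3; exact h3

/-- a child is never an ancestor of its parent -/
theorem not_reach_parent {p : α → α} {r v u : α} (ht : IsT p r) (hv : p v = u)
    (hvr : v ≠ r) : ∀ k, p^[k] u ≠ v := by
  intro k hk
  apply hvr
  apply ht.eq_root_of_cycle (m := k + 1) (Nat.succ_pos k)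
  rw [iterate_succ_apply, hv, hk]

theorem iterate_agree {p p' : α → α} {x : α} {k : ℕ}
    (h : ∀ l < k, p' (p^[l] x) = p (p^[l] x)) : p'^[k] x = p^[k] x := by
  induction k with
  | zero => rfl
  | succ k ih =>
    rw [iterate_succ_apply', iterate_succ_apply',
      ih (fun l hl => h l (Nat.lt_succ_of_lt hl)), h k (Nat.lt_succ_self k)]

/-- transfer reachability to a modified function, when we can handle all points of `Z ∪ {r}` -/
theorem reach_all {p p' : α → α} {r r' : α} (ht : IsT p r) (Z : α → Prop)
    (hagree : ∀ z, ¬ Z z → p' z = p z)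
    (hZ : ∀ z, Z z ∨ z = r → Rch p' z r') :
    ∀ x, Rch p' x r' := by
  intro x
  obtain ⟨k, hk⟩ := ht.2 x
  have hex : ∃ m, Z (p^[m] x) ∨ p^[m] x = r := ⟨k, Or.inr hk⟩
  set m := Nat.find hex with hm
  have hspec := Nat.find_spec hex
  have hagree' : p'^[m] x = p^[m] x := by
    apply iterate_agree
    intro l hl
    apply hagree
    intro hZl
    exact Nat.find_min hex hl (Or.inl hZl)
  exact Rch.trans ⟨m, hagree'⟩ (hZ _ hspec)

/-- transfer reachability back: if `p'` agrees with `p` away from target `y` -/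
theorem rch_transfer {p p' : α → α} {y : α} (hagree : ∀ z, z ≠ y → p' z = p z)
    {x : α} (h : Rch p' x y) : Rch p x y := by
  obtain ⟨k, hk⟩ := h
  have hex : ∃ k, p'^[k] x = y := ⟨k, hk⟩
  set m := Nat.find hex with hm
  have hspec := Nat.find_spec hex
  refine ⟨m, ?_⟩
  have : p^[m] x = p'^[m] x := by
    apply iterate_agree (p := p') (p' := p)
    intro l hl
    exact (hagree _ (fun hly => Nat.find_min hex hl hly)).symm
  rw [this]; exact hspec

/-- the surgery: returns (new parent function, new root, new marked vertex) -/
noncomputable def move (p : α → α) (r v u w : α) : (α → α) × α × α :=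
  if v = w then
    if u = r then (update (update p u w) w w, w, u)
    else (update (update p u w) w (p u), r, u)
  else if ∃ k, p^[k] w = v then
    if u = r then (update (update (update p v w) u (p w)) w w, w, v)
    else (update (update (update p v w) u (p w)) w (p u), r, v)
  else (update p v w, r, v)

variable {p : α → α} {r v u w : α}

theorem move_deg_root (h1 : v = w) (h3 : u = r) :
    move p r v u w = (update (update p u w) w w, w, u) := by
  rw [move, if_pos h1, if_pos h3]

theorem move_deg (h1 : v = w) (h3 : u ≠ r) :
    move p r v u w = (update (update p u w) w (p u), r, u) := by
  rw [move, if_pos h1, if_neg h3]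

theorem move_bad_root (h1 : v ≠ w) (h2 : ∃ k, p^[k] w = v) (h3 : u = r) :
    move p r v u w = (update (update (update p v w) u (p w)) w w, w, v) := by
  rw [move, if_neg h1, if_pos h2, if_pos h3]

theorem move_bad (h1 : v ≠ w) (h2 : ∃ k, p^[k] w = v) (h3 : u ≠ r) :
    move p r v u w = (update (update (update p v w) u (p w)) w (p u), r, v) := by
  rw [move, if_neg h1, if_pos h2, if_neg h3]

theorem move_good (h1 : v ≠ w) (h2 : ¬ ∃ k, p^[k] w = v) :
    move p r v u w = (update p v w, r, v) := by
  rw [move, if_neg h1, if_neg h2]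

section Facts

variable (ht : IsT p r) (hv : p v = u) (hvr : v ≠ r) (huw : u ≠ w)

include ht hv hvr

theorem vne_u : v ≠ u := by
  intro h
  exact not_reach_parent ht hv hvr 0 h.symm

/-- in the bad case, `w` is not the root -/
theorem wne_r (h2 : ∃ k, p^[k] w = v) : w ≠ r := by
  obtain ⟨k, hk⟩ := h2
  intro h
  subst h
  apply hvr
  rw [← hk, ht.iter_root]

/-- the path from `p u` to the root avoids `v`, `u`, `w` (bad case) -/
theorem q_avoid (hur : u ≠ r) (h2 : ∃ k, p^[k] w = v) :
    ∀ l, p^[l] (p u) ≠ v ∧ p^[l] (p u) ≠ u ∧ p^[l] (p u) ≠ w := by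
  intro l
  refine ⟨?_, ?_, ?_⟩
  · intro h
    exact not_reach_parent ht hv hvr (l + 1) (by rwa [iterate_succ_apply])
  · intro h
    apply hur
    apply ht.eq_root_of_cycle (m := l + 1) (Nat.succ_pos l)
    rwa [iterate_succ_apply]
  · intro h
    obtain ⟨c, hc⟩ := h2
    apply not_reach_parent ht hv hvr (c + (l + 1))
    rw [iterate_add_apply, iterate_succ_apply, h, hc]

/-- in the deg case `v = w`: the path from `p u` avoids `u`, `w` -/
theorem q_avoid_deg (hur : u ≠ r) (h1 : v = w) :
    ∀ l, p^[l] (p u) ≠ u ∧ p^[l] (p u) ≠ w := by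
  intro l
  refine ⟨?_, ?_⟩
  · intro h
    apply hur
    apply ht.eq_root_of_cycle (m := l + 1) (Nat.succ_pos l)
    rwa [iterate_succ_apply]
  · intro h
    subst h1
    exact not_reach_parent ht hv hvr (l + 1) (by rwa [iterate_succ_apply])

/-- in the bad case: a path from `p w` to `v` avoiding `v`, `u`, `w` strictly before arrival -/
theorem x1_path (h1 : v ≠ w) (h2 : ∃ k, p^[k] w = v) :
    ∃ c, p^[c] (p w) = v ∧ ∀ l < c,
      p^[l] (p w) ≠ v ∧ p^[l] (p w) ≠ u ∧ p^[l] (p w) ≠ w := by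
  have hex : ∃ c, p^[c] (p w) = v := by
    obtain ⟨k, hk⟩ := h2
    match k, hk with
    | 0, hk => exact absurd hk.symm h1
    | (k+1), hk => exact ⟨k, by rwa [iterate_succ_apply] at hk⟩
  refine ⟨Nat.find hex, Nat.find_spec hex, ?_⟩
  intro l hl
  refine ⟨Nat.find_min hex hl, ?_, ?_⟩
  · intro h
    apply not_reach_parent ht hv hvr (Nat.find hex - l)
    rw [← h, ← iterate_add_apply, Nat.sub_add_cancel (Nat.le_of_lt hl)]
    exact Nat.find_spec hex
  · intro h
    apply wne_r ht hv hvr h2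
    apply ht.eq_root_of_cycle (m := l + 1) (Nat.succ_pos l)
    rwa [iterate_succ_apply]

end Facts

section Main

variable (ht : IsT p r) (hv : p v = u) (hvr : v ≠ r) (huw : u ≠ w)

include ht hv hvr huw

theorem move_isT : IsT (move p r v u w).1 (move p r v u w).2.1 := by
  have hvu : v ≠ u := vne_u ht hv hvr
  by_cases h1 : v = w
  · by_cases h3 : u = r
    · rw [move_deg_root h1 h3]
      set p' := update (update p u w) w w with hp'
      show IsT p' w
      have hpu : p' u = w := by rw [hp', update_of_ne huw, update_self]
      have hpw : p' w = w := by rw [hp', update_self]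
      constructor
      · exact hpw
      · apply reach_all ht (Z := fun z => z = u ∨ z = w)
        · intro z hz
          push_neg at hz
          rw [hp', update_of_ne hz.2, update_of_ne hz.1]
        · rintro z ((rfl | rfl) | rfl)
          · exact Rch.trans (Rch.single hpu) (Rch.refl _ _)
          · exact Rch.refl _ _
          · rw [← h3]; exact Rch.single hpu
    · rw [move_deg h1 h3]
      set p' := update (update p u w) w (p u) with hp'
      show IsT p' r
      have hwr : w ≠ r := h1 ▸ hvr
      have hpu : p' u = w := by rw [hp', update_of_ne huw, update_self]
      have hpw : p' w = p u := by rw [hp', update_self]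
      have havoid := q_avoid_deg ht hv hvr h3 h1
      have hRw : Rch p' w r := by
        obtain ⟨k, hk⟩ := ht.2 (p u)
        have : p'^[k] (p u) = r := by
          rw [← hk]
          apply iterate_agree
          intro l _
          rw [hp', update_of_ne (havoid l).2, update_of_ne (havoid l).1]
        exact Rch.trans (Rch.single hpw) ⟨k, this⟩
      constructor
      · rw [hp', update_of_ne hwr.symm, update_of_ne (Ne.symm h3)]
        exact ht.1
      · apply reach_all ht (Z := fun z => z = u ∨ z = w)
        · intro z hz
          push_neg at hz
          rw [hp', update_of_ne hz.2, update_of_ne hz.1]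
        · rintro z ((rfl | rfl) | rfl)
          · exact Rch.trans (Rch.single hpu) hRw
          · exact hRw
          · exact Rch.refl _ _
  · by_cases h2 : ∃ k, p^[k] w = v
    · have hwr : w ≠ r := wne_r ht hv hvr h2
      obtain ⟨c, hc, hcav⟩ := x1_path ht hv hvr h1 h2
      by_cases h3 : u = r
      · rw [move_bad_root h1 h2 h3]
        set p' := update (update (update p v w) u (p w)) w w with hp'
        show IsT p' w
        have hpv : p' v = w := by
          rw [hp', update_of_ne h1, update_of_ne hvu, update_self]
        have hpu : p' u = p w := by rw [hp', update_of_ne huw, update_self]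
        have hpw : p' w = w := by rw [hp', update_self]
        have hRv : Rch p' v w := Rch.single hpv
        have hRu : Rch p' u w := by
          have : p'^[c] (p w) = v := by
            rw [← hc]
            apply iterate_agree
            intro l hl
            obtain ⟨a1, a2, a3⟩ := hcav l hl
            rw [hp', update_of_ne a3, update_of_ne a2, update_of_ne a1]
          exact Rch.trans (Rch.trans (Rch.single hpu) ⟨c, this⟩) hRv
        constructor
        · exact hpw
        · apply reach_all ht (Z := fun z => z = v ∨ z = u ∨ z = w)
          · intro z hz
            push_neg at hz
            rw [hp', update_of_ne hz.2.2, update_of_ne hz.2.1, update_of_ne hz.1]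
          · rintro z ((rfl | rfl | rfl) | rfl)
            · exact hRv
            · exact hRu
            · exact Rch.refl _ _
            · rw [← h3]; exact hRu
      · rw [move_bad h1 h2 h3]
        set p' := update (update (update p v w) u (p w)) w (p u) with hp'
        show IsT p' r
        have hpv : p' v = w := by
          rw [hp', update_of_ne h1, update_of_ne hvu, update_self]
        have hpu : p' u = p w := by rw [hp', update_of_ne huw, update_self]
        have hpw : p' w = p u := by rw [hp', update_self]
        have havoid := q_avoid ht hv hvr h3 h2
        have hRw : Rch p' w r := by
          obtain ⟨k, hk⟩ := ht.2 (p u)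
          have : p'^[k] (p u) = r := by
            rw [← hk]
            apply iterate_agree
            intro l _
            obtain ⟨a1, a2, a3⟩ := havoid l
            rw [hp', update_of_ne a3, update_of_ne a2, update_of_ne a1]
          exact Rch.trans (Rch.single hpw) ⟨k, this⟩
        have hRv : Rch p' v r := Rch.trans (Rch.single hpv) hRw
        have hRu : Rch p' u r := by
          have : p'^[c] (p w) = v := by
            rw [← hc]
            apply iterate_agree
            intro l hl
            obtain ⟨a1, a2, a3⟩ := hcav l hl
            rw [hp', update_of_ne a3, update_of_ne a2, update_of_ne a1]
          exact Rch.trans (Rch.trans (Rch.single hpu) ⟨c, this⟩) hRv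
        constructor
        · rw [hp', update_of_ne hwr.symm, update_of_ne (Ne.symm h3), update_of_ne hvr.symm]
          exact ht.1
        · apply reach_all ht (Z := fun z => z = v ∨ z = u ∨ z = w)
          · intro z hz
            push_neg at hz
            rw [hp', update_of_ne hz.2.2, update_of_ne hz.2.1, update_of_ne hz.1]
          · rintro z ((rfl | rfl | rfl) | rfl)
            · exact hRv
            · exact hRu
            · exact hRw
            · exact Rch.refl _ _
    · rw [move_good h1 h2]
      set p' := update p v w with hp'
      show IsT p' r
      push_neg at h2
      have hpv : p' v = w := by rw [hp', update_self]
      have hRw : Rch p' w r := by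
        obtain ⟨k, hk⟩ := ht.2 w
        have : p'^[k] w = r := by
          rw [← hk]
          apply iterate_agree
          intro l _
          rw [hp', update_of_ne (h2 l)]
        exact ⟨k, this⟩
      constructor
      · rw [hp', update_of_ne hvr.symm]
        exact ht.1
      · apply reach_all ht (Z := fun z => z = v)
        · intro z hz
          rw [hp', update_of_ne hz]
        · rintro z (rfl | rfl)
          · exact Rch.trans (Rch.single hpv) hRw
          · exact Rch.refl _ _

theorem move_marked :
    (move p r v u w).1 (move p r v u w).2.2 = w ∧
      (move p r v u w).2.2 ≠ (move p r v u w).2.1 ∧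
      ((move p r v u w).2.2 = v ∨ ((move p r v u w).2.2 = u ∧ v = w)) := by
  have hvu : v ≠ u := vne_u ht hv hvr
  by_cases h1 : v = w
  · by_cases h3 : u = r
    · rw [move_deg_root h1 h3]
      exact ⟨by simp [update_of_ne huw], huw, Or.inr ⟨rfl, h1⟩⟩
    · rw [move_deg h1 h3]
      exact ⟨by simp [update_of_ne huw], h3, Or.inr ⟨rfl, h1⟩⟩
  · by_cases h2 : ∃ k, p^[k] w = v
    · by_cases h3 : u = r
      · rw [move_bad_root h1 h2 h3]
        exact ⟨by simp [update_of_ne h1, update_of_ne hvu], h1, Or.inl rfl⟩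
      · rw [move_bad h1 h2 h3]
        exact ⟨by simp [update_of_ne h1, update_of_ne hvu], hvr, Or.inl rfl⟩
    · rw [move_good h1 h2]
      exact ⟨by simp, hvr, Or.inl rfl⟩

omit ht hv hvr huw in
theorem move_root :
    (move p r v u w).2.1 = r ∨ ((move p r v u w).2.1 = w ∧ u = r) := by
  by_cases h1 : v = w
  · by_cases h3 : u = r
    · rw [move_deg_root h1 h3]; exact Or.inr ⟨rfl, h3⟩
    · rw [move_deg h1 h3]; exact Or.inl rfl
  · by_cases h2 : ∃ k, p^[k] w = v
    · by_cases h3 : u = r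
      · rw [move_bad_root h1 h2 h3]; exact Or.inr ⟨rfl, h3⟩
      · rw [move_bad h1 h2 h3]; exact Or.inl rfl
    · rw [move_good h1 h2]; exact Or.inl rfl

theorem move_move :
    move (move p r v u w).1 (move p r v u w).2.1 (move p r v u w).2.2 w u
      = (p, r, v) := by
  have hvu : v ≠ u := vne_u ht hv hvr
  by_cases h1 : v = w
  · by_cases h3 : u = r
    · rw [move_deg_root h1 h3]
      set p' := update (update p u w) w w with hp'
      have e1 : move p' w u w u = (update (update p' w u) u u, u, w) :=
        move_deg_root rfl rfl
      rw [e1]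
      refine Prod.ext ?_ (Prod.ext h3 h1.symm)
      show update (update p' w u) u u = p
      funext z
      by_cases hzu : z = u
      · subst hzu
        rw [update_self, h3, ht.1]
      · rw [update_of_ne hzu]
        by_cases hzw : z = w
        · subst hzw
          rw [update_self, ← hv, h1]
        · rw [update_of_ne hzw, hp', update_of_ne hzw, update_of_ne hzu]
    · rw [move_deg h1 h3]
      set p' := update (update p u w) w (p u) with hp'
      have hwr : w ≠ r := h1 ▸ hvr
      have e1 : move p' r u w u = (update (update p' w u) u (p' w), r, w) :=
        move_deg rfl hwr
      rw [e1]
      refine Prod.ext ?_ (Prod.ext rfl h1.symm)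
      show update (update p' w u) u (p' w) = p
      have hpw : p' w = p u := by rw [hp', update_self]
      funext z
      by_cases hzu : z = u
      · subst hzu
        rw [update_self, hpw]
      · rw [update_of_ne hzu]
        by_cases hzw : z = w
        · subst hzw
          rw [update_self, ← hv, h1]
        · rw [update_of_ne hzw, hp', update_of_ne hzw, update_of_ne hzu]
  · by_cases h2 : ∃ k, p^[k] w = v
    · have hwr : w ≠ r := wne_r ht hv hvr h2
      obtain ⟨c, hc, hcav⟩ := x1_path ht hv hvr h1 h2
      by_cases h3 : u = r
      · rw [move_bad_root h1 h2 h3]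
        set p' := update (update (update p v w) u (p w)) w w with hp'
        have hpv : p' v = w := by
          rw [hp', update_of_ne h1, update_of_ne hvu, update_self]
        have hpu : p' u = p w := by rw [hp', update_of_ne huw, update_self]
        have hpw : p' w = w := by rw [hp', update_self]
        have hreach : ∃ k, p'^[k] u = v := by
          refine ⟨c + 1, ?_⟩
          rw [iterate_succ_apply, hpu, ← hc]
          apply iterate_agree
          intro l hl
          obtain ⟨a1, a2, a3⟩ := hcav l hl
          rw [hp', update_of_ne a3, update_of_ne a2, update_of_ne a1]
        have e1 : move p' w v w u
            = (update (update (update p' v u) w (p' u)) u u, u, v) :=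
          move_bad_root hvu hreach rfl
        rw [e1]
        refine Prod.ext ?_ (Prod.ext h3 rfl)
        show update (update (update p' v u) w (p' u)) u u = p
        funext z
        by_cases hzu : z = u
        · subst hzu
          rw [update_self, h3, ht.1]
        · rw [update_of_ne hzu]
          by_cases hzw : z = w
          · subst hzw
            rw [update_self, hpu]
          · rw [update_of_ne hzw]
            by_cases hzv : z = v
            · subst hzv
              rw [update_self, hv]
            · rw [update_of_ne hzv, hp', update_of_ne hzw, update_of_ne hzu,
                update_of_ne hzv]
      · rw [move_bad h1 h2 h3]
        set p' := update (update (update p v w) u (p w)) w (p u) with hp'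
        have hpv : p' v = w := by
          rw [hp', update_of_ne h1, update_of_ne hvu, update_self]
        have hpu : p' u = p w := by rw [hp', update_of_ne huw, update_self]
        have hpw : p' w = p u := by rw [hp', update_self]
        have hreach : ∃ k, p'^[k] u = v := by
          refine ⟨c + 1, ?_⟩
          rw [iterate_succ_apply, hpu, ← hc]
          apply iterate_agree
          intro l hl
          obtain ⟨a1, a2, a3⟩ := hcav l hl
          rw [hp', update_of_ne a3, update_of_ne a2, update_of_ne a1]
        have e1 : move p' r v w u
            = (update (update (update p' v u) w (p' u)) u (p' w), r, v) :=
          move_bad hvu hreach hwr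
        rw [e1]
        refine Prod.ext ?_ (Prod.ext rfl rfl)
        show update (update (update p' v u) w (p' u)) u (p' w) = p
        funext z
        by_cases hzu : z = u
        · subst hzu
          rw [update_self, hpw]
        · rw [update_of_ne hzu]
          by_cases hzw : z = w
          · subst hzw
            rw [update_self, hpu]
          · rw [update_of_ne hzw]
            by_cases hzv : z = v
            · subst hzv
              rw [update_self, hv]
            · rw [update_of_ne hzv, hp', update_of_ne hzw, update_of_ne hzu,
                update_of_ne hzv]
    · rw [move_good h1 h2]
      set p' := update p v w with hp'
      have hnr : ¬ ∃ k, p'^[k] u = v := by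
        intro h
        have : Rch p u v := by
          apply rch_transfer (y := v) (p := p) (p' := p')
          · intro z hz
            rw [hp', update_of_ne hz]
          · exact h
        obtain ⟨k, hk⟩ := this
        exact not_reach_parent ht hv hvr k hk
      have e1 : move p' r v w u = (update p' v u, r, v) := move_good hvu hnr
      rw [e1]
      refine Prod.ext ?_ (Prod.ext rfl rfl)
      show update p' v u = p
      rw [hp', update_idem, ← hv, update_eq_self]

end Main

noncomputable def cnt {β : Type*} (τ : α → β) (p : α → α) (r : α) (a : β) (b : α) : ℕ :=
  Nat.card {x : α // τ x = a ∧ x ≠ r ∧ p x = b}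

theorem card_aux [Fintype α] (Q : α → Prop) (v : α) (c : Prop) :
    Nat.card {y : α // (Q y ∧ y ≠ v) ∨ (y = v ∧ c)} + (if Q v then 1 else 0)
      = Nat.card {y : α // Q y} + (if c then 1 else 0) := by
  classical
  rw [Nat.card_eq_fintype_card, Nat.card_eq_fintype_card,
    Fintype.card_subtype, Fintype.card_subtype]
  have h1 : (Finset.univ.filter fun y => (Q y ∧ y ≠ v) ∨ (y = v ∧ c))
      = (Finset.univ.filter fun y => Q y ∧ y ≠ v)
        ∪ (Finset.univ.filter fun y => y = v ∧ c) := by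
    rw [← Finset.filter_or]
  have h2 : (Finset.univ.filter fun y : α => Q y)
      = (Finset.univ.filter fun y => Q y ∧ y ≠ v)
        ∪ (Finset.univ.filter fun y => Q y ∧ y = v) := by
    rw [← Finset.filter_or]
    apply Finset.filter_congr
    intro y _
    by_cases hy : y = v <;> simp [hy]
  have d1 : Disjoint (Finset.univ.filter fun y => Q y ∧ y ≠ v)
      (Finset.univ.filter fun y : α => y = v ∧ c) := by
    rw [Finset.disjoint_left]
    intro y hy1 hy2
    simp only [Finset.mem_filter] at hy1 hy2
    exact hy1.2.2 hy2.2.1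
  have d2 : Disjoint (Finset.univ.filter fun y => Q y ∧ y ≠ v)
      (Finset.univ.filter fun y : α => Q y ∧ y = v) := by
    rw [Finset.disjoint_left]
    intro y hy1 hy2
    simp only [Finset.mem_filter] at hy1 hy2
    exact hy1.2.2 hy2.2.2
  rw [h1, h2, Finset.card_union_of_disjoint d1, Finset.card_union_of_disjoint d2]
  have h3 : (Finset.univ.filter fun y : α => y = v ∧ c).card = if c then 1 else 0 := by
    split_ifs with hc
    · rw [show (Finset.univ.filter fun y : α => y = v ∧ c) = {v} by
        ext y; simp [hc]]
      rfl
    · rw [show (Finset.univ.filter fun y : α => y = v ∧ c) = ∅ by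
        ext y; simp [hc]]
      rfl
  have h4 : (Finset.univ.filter fun y : α => Q y ∧ y = v).card = if Q v then 1 else 0 := by
    split_ifs with hq
    · rw [show (Finset.univ.filter fun y : α => Q y ∧ y = v) = {v} by
        ext y
        simp only [Finset.mem_filter, Finset.mem_univ, true_and, Finset.mem_singleton]
        constructor
        · exact fun h => h.2
        · rintro rfl; exact ⟨hq, rfl⟩]
      rfl
    · rw [show (Finset.univ.filter fun y : α => Q y ∧ y = v) = ∅ by
        ext y
        simp only [Finset.mem_filter, Finset.mem_univ, true_and,
          Finset.notMem_empty, iff_false]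
        rintro ⟨h, rfl⟩; exact hq h]
      rfl
  rw [h3, h4]
  omega

theorem cnt_formula [Fintype α] {β : Type*} {τ : α → β} {p p' : α → α} {r r' : α}
    {v u w : α} (π : Equiv.Perm α)
    (hmem : ∀ (a : β) (b : α) (x : α),
      (τ x = a ∧ x ≠ r' ∧ p' x = b) ↔
        ((τ (π x) = a ∧ π x ≠ r ∧ p (π x) = b) ∧ π x ≠ v) ∨
          (π x = v ∧ τ v = a ∧ w = b))
    (hvr : v ≠ r) (hv : p v = u) :
    ∀ a b, cnt τ p' r' a b + (if τ v = a ∧ u = b then 1 else 0)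
         = cnt τ p r a b + (if τ v = a ∧ w = b then 1 else 0) := by
  intro a b
  classical
  have e1 : cnt τ p' r' a b
      = Nat.card {y : α // ((τ y = a ∧ y ≠ r ∧ p y = b) ∧ y ≠ v)
          ∨ (y = v ∧ τ v = a ∧ w = b)} := by
    apply Nat.card_congr
    exact Equiv.subtypeEquiv π (hmem a b)
  rw [e1]
  have e2 := card_aux (fun y => τ y = a ∧ y ≠ r ∧ p y = b) v (τ v = a ∧ w = b)
  have e3 : ((if τ v = a ∧ v ≠ r ∧ p v = b then 1 else 0) : ℕ)
      = if τ v = a ∧ u = b then 1 else 0 := by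
    apply if_congr _ rfl rfl
    rw [hv]
    simp [hvr]
  rw [← e3]
  unfold cnt
  convert e2 using 2 <;> congr!

section Cnt

variable [Fintype α] {β : Type*} {τ : α → β}
variable (ht : IsT p r) (hv : p v = u) (hvr : v ≠ r) (huw : u ≠ w)

include ht hv hvr huw

set_option maxHeartbeats 1000000 in
theorem move_cnt (hτ : τ u = τ w) :
    ∀ a b, cnt τ (move p r v u w).1 (move p r v u w).2.1 a b
        + (if τ v = a ∧ u = b then 1 else 0)
      = cnt τ p r a b + (if τ v = a ∧ w = b then 1 else 0) := by
  have hvu : v ≠ u := vne_u ht hv hvr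
  by_cases h1 : v = w
  · have hwr : w ≠ r := h1 ▸ hvr
    have hτv : τ v = τ u := by rw [h1, hτ]
    by_cases h3 : u = r
    · rw [move_deg_root h1 h3]
      refine cnt_formula (Equiv.swap u w) ?_ hvr hv
      intro a b x
      show (τ x = a ∧ x ≠ w ∧ update (update p u w) w w x = b) ↔ _
      by_cases hxu : x = u
      · subst hxu
        rw [Equiv.swap_apply_left, update_of_ne huw, update_self]
        have i1 : τ x = a ↔ τ v = a := by rw [hτv]
        have i2 : w = v := h1.symm
        tauto
      · by_cases hxw : x = w
        · subst hxw
          rw [Equiv.swap_apply_right, update_self]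
          have i1 : u ≠ r → False := fun h => h h3
          have i2 : u ≠ v := fun h => hvu h.symm
          tauto
        · rw [Equiv.swap_apply_of_ne_of_ne hxu hxw, update_of_ne hxw,
            update_of_ne hxu]
          have i2 : x ≠ v := fun h => hxw (h.trans h1)
          have i3 : x ≠ r := fun h => hxu (h.trans h3.symm)
          tauto
    · rw [move_deg h1 h3]
      refine cnt_formula (Equiv.swap u w) ?_ hvr hv
      intro a b x
      show (τ x = a ∧ x ≠ r ∧ update (update p u w) w (p u) x = b) ↔ _
      by_cases hxu : x = u
      · subst hxu
        rw [Equiv.swap_apply_left, update_of_ne huw, update_self]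
        have i1 : τ x = a ↔ τ v = a := by rw [hτv]
        have i2 : w = v := h1.symm
        have i3 : x ≠ r := h3
        tauto
      · by_cases hxw : x = w
        · subst hxw
          rw [Equiv.swap_apply_right, update_self]
          have i1 : τ x = a ↔ τ u = a := by rw [hτ]
          have i2 : u ≠ v := fun h => hvu h.symm
          have i3 : x ≠ r := hwr
          have i4 : u ≠ r := h3
          tauto
        · rw [Equiv.swap_apply_of_ne_of_ne hxu hxw, update_of_ne hxw,
            update_of_ne hxu]
          have i2 : x ≠ v := fun h => hxw (h.trans h1)
          tauto
  · by_cases h2 : ∃ k, p^[k] w = v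
    · have hwr : w ≠ r := wne_r ht hv hvr h2
      have hwv : w ≠ v := fun h => h1 h.symm
      have huv : u ≠ v := fun h => hvu h.symm
      by_cases h3 : u = r
      · rw [move_bad_root h1 h2 h3]
        refine cnt_formula (Equiv.swap u w) ?_ hvr hv
        intro a b x
        show (τ x = a ∧ x ≠ w ∧
          update (update (update p v w) u (p w)) w w x = b) ↔ _
        by_cases hxv : x = v
        · subst hxv
          rw [Equiv.swap_apply_of_ne_of_ne hvu h1, update_of_ne h1,
            update_of_ne hvu, update_self]
          have i1 : x ≠ w := h1
          tauto
        · by_cases hxu : x = u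
          · subst hxu
            rw [Equiv.swap_apply_left, update_of_ne huw, update_self]
            have i1 : τ x = a ↔ τ w = a := by rw [hτ]
            have i2 : x ≠ w := huw
            have i3 : w ≠ r := hwr
            tauto
          · by_cases hxw : x = w
            · subst hxw
              rw [Equiv.swap_apply_right, update_self]
              have i1 : u ≠ r → False := fun h => h h3
              tauto
            · rw [Equiv.swap_apply_of_ne_of_ne hxu hxw, update_of_ne hxw,
                update_of_ne hxu, update_of_ne hxv]
              have i3 : x ≠ r := fun h => hxu (h.trans h3.symm)
              tauto
      · rw [move_bad h1 h2 h3]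
        refine cnt_formula (Equiv.swap u w) ?_ hvr hv
        intro a b x
        show (τ x = a ∧ x ≠ r ∧
          update (update (update p v w) u (p w)) w (p u) x = b) ↔ _
        by_cases hxv : x = v
        · subst hxv
          rw [Equiv.swap_apply_of_ne_of_ne hvu h1, update_of_ne h1,
            update_of_ne hvu, update_self]
          have i1 : x ≠ r := hvr
          tauto
        · by_cases hxu : x = u
          · subst hxu
            rw [Equiv.swap_apply_left, update_of_ne huw, update_self]
            have i1 : τ x = a ↔ τ w = a := by rw [hτ]
            have i2 : x ≠ r := h3
            have i3 : w ≠ r := hwr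
            tauto
          · by_cases hxw : x = w
            · subst hxw
              rw [Equiv.swap_apply_right, update_self]
              have i1 : τ x = a ↔ τ u = a := by rw [hτ]
              have i2 : x ≠ r := hwr
              have i3 : u ≠ r := h3
              tauto
            · rw [Equiv.swap_apply_of_ne_of_ne hxu hxw, update_of_ne hxw,
                update_of_ne hxu, update_of_ne hxv]
              tauto
    · rw [move_good h1 h2]
      refine cnt_formula (Equiv.refl α) ?_ hvr hv
      intro a b x
      show (τ x = a ∧ x ≠ r ∧ update p v w x = b) ↔ _
      rw [Equiv.refl_apply]
      by_cases hxv : x = v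
      · subst hxv
        rw [update_self]
        have i1 : x ≠ r := hvr
        tauto
      · rw [update_of_ne hxv]
        tauto

end Cnt

end CayMove

private lemma aux_move {d : ℕ} {n : Fin d → ℕ} {ρ s : Fin d}
    {δ δ' : Fin d → Vtx d n → ℕ} {uu ww : Vtx d n}
    (huw : uu ≠ ww) (hτuw : uu.1 = ww.1)
    (hδ : ∀ (a : Fin d) (b : Vtx d n),
      δ a b + (if s = a ∧ ww = b then 1 else 0)
        = δ' a b + (if s = a ∧ uu = b then 1 else 0))
    (q : MTree d n × Vtx d n)
    (hq : (q.1.root.1 = ρ ∧ ∀ a b, q.1.ch a b = δ a b) ∧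
        q.2.1 = s ∧ q.2 ≠ q.1.root ∧ q.1.parent q.2 = uu) :
    ∃ T' : MTree d n,
      T'.1.1 = (CayMove.move q.1.parent q.1.root q.2 uu ww).2.1 ∧
      T'.1.2 = (CayMove.move q.1.parent q.1.root q.2 uu ww).1 ∧
      ((T'.root.1 = ρ ∧ ∀ a b, T'.ch a b = δ' a b) ∧
        (CayMove.move q.1.parent q.1.root q.2 uu ww).2.2.1 = s ∧
        (CayMove.move q.1.parent q.1.root q.2 uu ww).2.2 ≠ T'.root ∧
        T'.parent (CayMove.move q.1.parent q.1.root q.2 uu ww).2.2 = ww) := by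
  classical
  obtain ⟨⟨hρ, hch⟩, hx1, hxr, hpx⟩ := hq
  have ht : CayMove.IsT q.1.parent q.1.root := q.1.2
  have hM := CayMove.move_isT ht hpx hxr huw
  have hmk := CayMove.move_marked ht hpx hxr huw
  have hrt := CayMove.move_root (p := q.1.parent) (r := q.1.root) (v := q.2)
    (u := uu) (w := ww)
  refine ⟨⟨((CayMove.move q.1.parent q.1.root q.2 uu ww).2.1,
      (CayMove.move q.1.parent q.1.root q.2 uu ww).1), hM.1, hM.2⟩,
    rfl, rfl, ⟨?_, ?_⟩, ?_, hmk.2.1, hmk.1⟩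
  · -- root type
    rcases hrt with h | ⟨h, hur⟩
    · show (CayMove.move q.1.parent q.1.root q.2 uu ww).2.1.1 = ρ
      rw [h]; exact hρ
    · show (CayMove.move q.1.parent q.1.root q.2 uu ww).2.1.1 = ρ
      rw [h, ← hτuw, hur]; exact hρ
  · -- ch condition
    intro a b
    have e := CayMove.move_cnt ht hpx hxr huw (τ := Sigma.fst) hτuw a b
    have e2 : CayMove.cnt Sigma.fst q.1.parent q.1.root a b = δ a b := hch a b
    rw [e2, hx1] at e
    have e3 := hδ a b
    show CayMove.cnt Sigma.fst
      (CayMove.move q.1.parent q.1.root q.2 uu ww).1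
      (CayMove.move q.1.parent q.1.root q.2 uu ww).2.1 a b = δ' a b
    by_cases c1 : s = a ∧ uu = b
    · by_cases c2 : s = a ∧ ww = b
      · exact absurd (c1.2.trans c2.2.symm) huw
      · rw [if_pos c1, if_neg c2] at e
        rw [if_neg c2, if_pos c1] at e3
        omega
    · by_cases c2 : s = a ∧ ww = b
      · rw [if_neg c1, if_pos c2] at e
        rw [if_pos c2, if_neg c1] at e3
        omega
      · rw [if_neg c1, if_neg c2] at e
        rw [if_neg c2, if_neg c1] at e3
        omega
  · -- marked type
    rcases hmk.2.2 with h | ⟨h, hvw⟩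
    · rw [h]; exact hx1
    · rw [h, hτuw, ← hvw]; exact hx1


/-- **Symmetry lemma for multitype Cayley trees (Lemma 5).**
Moving one unit of indegree `(s, ·)` from the vertex `(t,i)` to the vertex `(t,j)`
changes the number of trees with prescribed indegree vector by the explicit factor:
`γ_{s,t,i} · |T_{ρ,γ}| = γ'_{s,t,j} · |T_{ρ,γ'}|`. -/
theorem multitype_cayley_symmetry (d : ℕ) (n : Fin d → ℕ) (hn : ∀ t, 0 < n t)
    (ρ : Fin d) (γ : Fin d → Vtx d n → ℕ)
    (s t : Fin d) (i j : Fin (n t)) (hij : i ≠ j) (hγpos : 1 ≤ γ s ⟨t, i⟩)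
    (γ' : Fin d → Vtx d n → ℕ)
    (hγ' : ∀ (a : Fin d) (b : Vtx d n),
      γ' a b =
        if a = s ∧ b = ⟨t, i⟩ then γ s ⟨t, i⟩ - 1
        else if a = s ∧ b = ⟨t, j⟩ then γ s ⟨t, j⟩ + 1
        else γ a b) :
    γ s ⟨t, i⟩ *
        Nat.card {T : MTree d n // T.root.1 = ρ ∧ ∀ a b, T.ch a b = γ a b}
      =
    γ' s ⟨t, j⟩ *
        Nat.card {T : MTree d n // T.root.1 = ρ ∧ ∀ a b, T.ch a b = γ' a b} := by
  classical
  set u : Vtx d n := ⟨t, i⟩ with hu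
  set w : Vtx d n := ⟨t, j⟩ with hw
  have huw : u ≠ w := by
    intro h
    have h' : (⟨t, i⟩ : Vtx d n) = ⟨t, j⟩ := h
    injection h' with h1 h2
    exact hij h2
  have hδ1 : ∀ (a : Fin d) (b : Vtx d n),
      γ a b + (if s = a ∧ w = b then 1 else 0)
        = γ' a b + (if s = a ∧ u = b then 1 else 0) := by
    intro a b
    rw [hγ' a b]
    by_cases h1 : a = s
    · subst h1
      by_cases h2 : b = u
      · subst h2
        rw [if_neg (fun h => huw (Eq.symm h.2)), if_pos ⟨rfl, rfl⟩,
          if_pos ⟨rfl, rfl⟩]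
        omega
      · by_cases h3 : b = w
        · subst h3
          rw [if_pos ⟨rfl, rfl⟩, if_neg (fun h => h2 h.2),
            if_pos ⟨rfl, rfl⟩, if_neg (fun h => huw h.2)]
        · rw [if_neg (fun h => h3 h.2.symm), if_neg (fun h => h2 h.2),
            if_neg (fun h => h3 h.2), if_neg (fun h => h2 h.2.symm)]
    · rw [if_neg (fun h => h1 h.1.symm), if_neg (fun h => h1 h.1),
        if_neg (fun h => h1 h.1), if_neg (fun h => h1 h.1.symm)]
  have hδ2 : ∀ (a : Fin d) (b : Vtx d n),
      γ' a b + (if s = a ∧ u = b then 1 else 0)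
        = γ a b + (if s = a ∧ w = b then 1 else 0) := fun a b => (hδ1 a b).symm
  set PA : MTree d n × Vtx d n → Prop := fun q =>
    (q.1.root.1 = ρ ∧ ∀ a b, q.1.ch a b = γ a b) ∧
      q.2.1 = s ∧ q.2 ≠ q.1.root ∧ q.1.parent q.2 = u with hPA
  set PB : MTree d n × Vtx d n → Prop := fun q =>
    (q.1.root.1 = ρ ∧ ∀ a b, q.1.ch a b = γ' a b) ∧
      q.2.1 = s ∧ q.2 ≠ q.1.root ∧ q.1.parent q.2 = w with hPB
  -- the two maps
  have majA : ∀ q : {q // PA q}, PB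
      (Classical.choose (aux_move huw rfl hδ1 q.1 q.2),
        (CayMove.move q.1.1.parent q.1.1.root q.1.2 u w).2.2) := by
    intro q
    obtain ⟨h1, h2, h3⟩ := Classical.choose_spec (aux_move huw rfl hδ1 q.1 q.2)
    exact h3
  have majB : ∀ q : {q // PB q}, PA
      (Classical.choose (aux_move huw.symm rfl hδ2 q.1 q.2),
        (CayMove.move q.1.1.parent q.1.1.root q.1.2 w u).2.2) := by
    intro q
    obtain ⟨h1, h2, h3⟩ := Classical.choose_spec (aux_move huw.symm rfl hδ2 q.1 q.2)
    exact h3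
  have hAB : Nat.card {q // PA q} = Nat.card {q // PB q} := by
    apply Nat.card_congr
    refine ⟨fun q => ⟨(Classical.choose (aux_move huw rfl hδ1 q.1 q.2),
        (CayMove.move q.1.1.parent q.1.1.root q.1.2 u w).2.2), majA q⟩,
      fun q => ⟨(Classical.choose (aux_move huw.symm rfl hδ2 q.1 q.2),
        (CayMove.move q.1.1.parent q.1.1.root q.1.2 w u).2.2), majB q⟩, ?_, ?_⟩
    · intro q
      obtain ⟨⟨hq0, hq1⟩, hq2, hq3, hq4⟩ := q.2
      have ht : CayMove.IsT q.1.1.parent q.1.1.root := q.1.1.2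
      have hmm := CayMove.move_move ht hq4 hq3 huw
      obtain ⟨ha1, ha2, hprops⟩ := Classical.choose_spec (aux_move huw rfl hδ1 q.1 q.2)
      apply Subtype.ext
      show (Classical.choose (aux_move huw.symm rfl hδ2
          (Classical.choose (aux_move huw rfl hδ1 q.1 q.2),
            (CayMove.move q.1.1.parent q.1.1.root q.1.2 u w).2.2) (majA ⟨q.1, q.2⟩)),
        (CayMove.move
          (Classical.choose (aux_move huw rfl hδ1 q.1 q.2)).parent
          (Classical.choose (aux_move huw rfl hδ1 q.1 q.2)).root
          (CayMove.move q.1.1.parent q.1.1.root q.1.2 u w).2.2 w u).2.2) = q.1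
      have hmv : CayMove.move
          (Classical.choose (aux_move huw rfl hδ1 q.1 q.2)).parent
          (Classical.choose (aux_move huw rfl hδ1 q.1 q.2)).root
          (CayMove.move q.1.1.parent q.1.1.root q.1.2 u w).2.2 w u
          = (q.1.1.parent, q.1.1.root, q.1.2) := by
        show CayMove.move
          (Classical.choose (aux_move huw rfl hδ1 q.1 q.2)).1.2
          (Classical.choose (aux_move huw rfl hδ1 q.1 q.2)).1.1
          (CayMove.move q.1.1.parent q.1.1.root q.1.2 u w).2.2 w u = _
        rw [ha2, ha1]
        exact hmm
      obtain ⟨hb1, hb2, hbprops⟩ := Classical.choose_spec (aux_move huw.symm rfl hδ2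
          (Classical.choose (aux_move huw rfl hδ1 q.1 q.2),
            (CayMove.move q.1.1.parent q.1.1.root q.1.2 u w).2.2) (majA ⟨q.1, q.2⟩))
      refine Prod.ext ?_ ?_
      · apply Subtype.ext
        refine Prod.ext ?_ ?_
        · show _ = q.1.1.1.1
          rw [hb1]
          show (CayMove.move
            (Classical.choose (aux_move huw rfl hδ1 q.1 q.2)).parent
            (Classical.choose (aux_move huw rfl hδ1 q.1 q.2)).root
            (CayMove.move q.1.1.parent q.1.1.root q.1.2 u w).2.2 w u).2.1 = _
          rw [hmv]
          rfl
        · show _ = q.1.1.1.2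
          rw [hb2]
          show (CayMove.move
            (Classical.choose (aux_move huw rfl hδ1 q.1 q.2)).parent
            (Classical.choose (aux_move huw rfl hδ1 q.1 q.2)).root
            (CayMove.move q.1.1.parent q.1.1.root q.1.2 u w).2.2 w u).1 = _
          rw [hmv]
          rfl
      · show (CayMove.move
            (Classical.choose (aux_move huw rfl hδ1 q.1 q.2)).parent
            (Classical.choose (aux_move huw rfl hδ1 q.1 q.2)).root
            (CayMove.move q.1.1.parent q.1.1.root q.1.2 u w).2.2 w u).2.2 = q.1.2
        rw [hmv]
    · intro q
      obtain ⟨⟨hq0, hq1⟩, hq2, hq3, hq4⟩ := q.2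
      have ht : CayMove.IsT q.1.1.parent q.1.1.root := q.1.1.2
      have hmm := CayMove.move_move ht hq4 hq3 huw.symm
      obtain ⟨ha1, ha2, hprops⟩ := Classical.choose_spec (aux_move huw.symm rfl hδ2 q.1 q.2)
      apply Subtype.ext
      show (Classical.choose (aux_move huw rfl hδ1
          (Classical.choose (aux_move huw.symm rfl hδ2 q.1 q.2),
            (CayMove.move q.1.1.parent q.1.1.root q.1.2 w u).2.2) (majB ⟨q.1, q.2⟩)),
        (CayMove.move
          (Classical.choose (aux_move huw.symm rfl hδ2 q.1 q.2)).parent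
          (Classical.choose (aux_move huw.symm rfl hδ2 q.1 q.2)).root
          (CayMove.move q.1.1.parent q.1.1.root q.1.2 w u).2.2 u w).2.2) = q.1
      have hmv : CayMove.move
          (Classical.choose (aux_move huw.symm rfl hδ2 q.1 q.2)).parent
          (Classical.choose (aux_move huw.symm rfl hδ2 q.1 q.2)).root
          (CayMove.move q.1.1.parent q.1.1.root q.1.2 w u).2.2 u w
          = (q.1.1.parent, q.1.1.root, q.1.2) := by
        show CayMove.move
          (Classical.choose (aux_move huw.symm rfl hδ2 q.1 q.2)).1.2
          (Classical.choose (aux_move huw.symm rfl hδ2 q.1 q.2)).1.1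
          (CayMove.move q.1.1.parent q.1.1.root q.1.2 w u).2.2 u w = _
        rw [ha2, ha1]
        exact hmm
      obtain ⟨hb1, hb2, hbprops⟩ := Classical.choose_spec (aux_move huw rfl hδ1
          (Classical.choose (aux_move huw.symm rfl hδ2 q.1 q.2),
            (CayMove.move q.1.1.parent q.1.1.root q.1.2 w u).2.2) (majB ⟨q.1, q.2⟩))
      refine Prod.ext ?_ ?_
      · apply Subtype.ext
        refine Prod.ext ?_ ?_
        · show _ = q.1.1.1.1
          rw [hb1]
          show (CayMove.move
            (Classical.choose (aux_move huw.symm rfl hδ2 q.1 q.2)).parent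
            (Classical.choose (aux_move huw.symm rfl hδ2 q.1 q.2)).root
            (CayMove.move q.1.1.parent q.1.1.root q.1.2 w u).2.2 u w).2.1 = _
          rw [hmv]
          rfl
        · show _ = q.1.1.1.2
          rw [hb2]
          show (CayMove.move
            (Classical.choose (aux_move huw.symm rfl hδ2 q.1 q.2)).parent
            (Classical.choose (aux_move huw.symm rfl hδ2 q.1 q.2)).root
            (CayMove.move q.1.1.parent q.1.1.root q.1.2 w u).2.2 u w).1 = _
          rw [hmv]
          rfl
      · show (CayMove.move
            (Classical.choose (aux_move huw.symm rfl hδ2 q.1 q.2)).parent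
            (Classical.choose (aux_move huw.symm rfl hδ2 q.1 q.2)).root
            (CayMove.move q.1.1.parent q.1.1.root q.1.2 w u).2.2 u w).2.2 = q.1.2
        rw [hmv]
  have cardA : Nat.card {q // PA q} =
      Nat.card {T : MTree d n // T.root.1 = ρ ∧ ∀ a b, T.ch a b = γ a b} * γ s u := by
    have e : {q // PA q} ≃
        Σ T : {T : MTree d n // T.root.1 = ρ ∧ ∀ a b, T.ch a b = γ a b},
          {x : Vtx d n // x.1 = s ∧ x ≠ T.1.root ∧ T.1.parent x = u} :=
      { toFun := fun q => ⟨⟨q.1.1, q.2.1⟩, ⟨q.1.2, q.2.2⟩⟩,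
        invFun := fun z => ⟨(z.1.1, z.2.1), ⟨z.1.2, z.2.2⟩⟩,
        left_inv := fun q => rfl,
        right_inv := fun z => rfl }
    rw [Nat.card_congr e, Nat.card_eq_fintype_card, Fintype.card_sigma]
    have hfib : ∀ T : {T : MTree d n // T.root.1 = ρ ∧ ∀ a b, T.ch a b = γ a b},
        Fintype.card {x : Vtx d n // x.1 = s ∧ x ≠ T.1.root ∧ T.1.parent x = u}
          = γ s u := by
      intro T
      rw [← Nat.card_eq_fintype_card]
      exact T.2.2 s u
    rw [Finset.sum_congr rfl (fun T _ => hfib T), Finset.sum_const, smul_eq_mul,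
      Finset.card_univ, Nat.card_eq_fintype_card]
  have cardB : Nat.card {q // PB q} =
      Nat.card {T : MTree d n // T.root.1 = ρ ∧ ∀ a b, T.ch a b = γ' a b} * γ' s w := by
    have e : {q // PB q} ≃
        Σ T : {T : MTree d n // T.root.1 = ρ ∧ ∀ a b, T.ch a b = γ' a b},
          {x : Vtx d n // x.1 = s ∧ x ≠ T.1.root ∧ T.1.parent x = w} :=
      { toFun := fun q => ⟨⟨q.1.1, q.2.1⟩, ⟨q.1.2, q.2.2⟩⟩,
        invFun := fun z => ⟨(z.1.1, z.2.1), ⟨z.1.2, z.2.2⟩⟩,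
        left_inv := fun q => rfl,
        right_inv := fun z => rfl }
    rw [Nat.card_congr e, Nat.card_eq_fintype_card, Fintype.card_sigma]
    have hfib : ∀ T : {T : MTree d n // T.root.1 = ρ ∧ ∀ a b, T.ch a b = γ' a b},
        Fintype.card {x : Vtx d n // x.1 = s ∧ x ≠ T.1.root ∧ T.1.parent x = w}
          = γ' s w := by
      intro T
      rw [← Nat.card_eq_fintype_card]
      exact T.2.2 s w
    rw [Finset.sum_congr rfl (fun T _ => hfib T), Finset.sum_const, smul_eq_mul,
      Finset.card_univ, Nat.card_eq_fintype_card]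
  rw [mul_comm, mul_comm (γ' s w), ← cardA, ← cardB, hAB]
end
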